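/- arXiv:2010.09126 — 3 statements merged into one kernel-verified Lean document; each statement's English description precedes it below -/
import Mathlib

section
/- Let H be a complex separable infinite-dimensional Hilbert space and let T be a bounded linear operator on H which is not of the form T = λ·I + K for any λ ∈ ℂ and any compact operator K on H. Let C and D be real numbers with 0 < C < diam(W_e(T))/(4√2) and 0 < D < diam(W_e(T))/4. Then for every closed subspace M ⊆ H of finite codimension there exists a unit vector u ∈ M such that |⟨T u, u⟩| ≥ D, ‖T u − ⟨T u, u⟩ u‖ ≥ C, and ‖T* u − ⟨T* u, u⟩ u‖ ≥ C. -/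
open scoped InnerProductSpace

/-- The essential numerical range of a bounded operator `T`: the set of `z ∈ ℂ` such that
`⟨T eₙ, eₙ⟩ → z` for some orthonormal sequence `(eₙ)`. Here `⟨x, y⟩` (paper convention,
linear in the first variable) is Mathlib's `⟪y, x⟫_ℂ`. -/
def essNumRange {H : Type*} [NormedAddCommGroup H] [InnerProductSpace ℂ H]
    (T : H →L[ℂ] H) : Set ℂ :=
  {z | ∃ e : ℕ → H, Orthonormal ℂ e ∧
    Filter.Tendsto (fun n => ⟪e n, T (e n)⟫_ℂ) Filter.atTop (nhds z)}

/-- An orthonormal basis of `H`, viewed as an orthonormal sequence whose closed linear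
span is all of `H`. -/
def IsONBasis {H : Type*} [NormedAddCommGroup H] [InnerProductSpace ℂ H] (u : ℕ → H) : Prop :=
  Orthonormal ℂ u ∧ (Submodule.span ℂ (Set.range u)).topologicalClosure = ⊤

section Aux

open Filter

set_option linter.unusedSectionVars false

variable {H : Type*} [NormedAddCommGroup H] [InnerProductSpace ℂ H]


lemma aux_weak_null {e : ℕ → H} (he : Orthonormal ℂ e) (v : H) :
    Tendsto (fun n => ⟪e n, v⟫_ℂ) atTop (nhds 0) := by
  have hs : Summable fun n => ‖⟪e n, v⟫_ℂ‖ ^ 2 := he.inner_products_summable v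
  have h0 : Tendsto (fun n => ‖⟪e n, v⟫_ℂ‖ ^ 2) atTop (nhds 0) := hs.tendsto_atTop_zero
  rw [tendsto_zero_iff_norm_tendsto_zero]
  have h1 : Tendsto (fun n => Real.sqrt (‖⟪e n, v⟫_ℂ‖ ^ 2)) atTop (nhds (Real.sqrt 0)) :=
    (Real.continuous_sqrt.tendsto 0).comp h0
  simpa [Real.sqrt_sq (norm_nonneg _)] using h1

lemma aux_weak_null' {e : ℕ → H} (he : Orthonormal ℂ e) (v : H) :
    Tendsto (fun n => ⟪v, e n⟫_ℂ) atTop (nhds 0) := by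
  rw [tendsto_zero_iff_norm_tendsto_zero]
  have := (tendsto_zero_iff_norm_tendsto_zero.1 (aux_weak_null he v))
  simpa [norm_inner_symm] using this

lemma aux_proj_null [CompleteSpace H] {e : ℕ → H} (he : Orthonormal ℂ e)
    (F : Submodule ℂ H) [FiniteDimensional ℂ F] :
    Tendsto (fun n => ((Submodule.orthogonalProjectionOnto F (e n) : H))) atTop (nhds 0) := by
  let b := stdOrthonormalBasis ℂ F
  have hrep : ∀ n, ((Submodule.orthogonalProjectionOnto F (e n) : H))
      = ∑ i, ⟪(b i : H), e n⟫_ℂ • (b i : H) := by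
    intro n
    rw [b.orthogonalProjectionOnto_apply_eq_sum]
    push_cast
    rfl
  simp only [hrep]
  have : Tendsto (fun n => ∑ i, ⟪(b i : H), e n⟫_ℂ • (b i : H)) atTop
      (nhds (∑ i : Fin (Module.finrank ℂ F), (0 : H))) := by
    refine tendsto_finset_sum _ (fun i _ => ?_)
    have h := (aux_weak_null' he (b i : H)).smul_const (b i : H)
    simpa using h
  simpa using this


lemma aux_cross (T : H →L[ℂ] H) (x x' y y' : H) :
    ‖⟪x, T y⟫_ℂ - ⟪x', T y'⟫_ℂ‖ ≤ ‖x - x'‖ * (‖T‖ * ‖y‖) + ‖x'‖ * (‖T‖ * ‖y - y'‖) := by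
  have hid : ⟪x, T y⟫_ℂ - ⟪x', T y'⟫_ℂ = ⟪x - x', T y⟫_ℂ + ⟪x', T (y - y')⟫_ℂ := by
    rw [inner_sub_left, map_sub, inner_sub_right]; ring
  rw [hid]
  refine (norm_add_le _ _).trans (add_le_add ?_ ?_)
  · exact (norm_inner_le_norm _ _).trans (by
      gcongr; exact T.le_opNorm y)
  · exact (norm_inner_le_norm _ _).trans (by
      gcongr; exact T.le_opNorm _)

lemma aux_inner_lim (T : H →L[ℂ] H) {x x' y y' : ℕ → H} {c : ℂ}
    (hx : Tendsto (fun n => x n - x' n) atTop (nhds 0))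
    (hy : Tendsto (fun n => y n - y' n) atTop (nhds 0))
    (hx' : ∀ n, ‖x' n‖ ≤ 1) (hy' : ∀ n, ‖y' n‖ ≤ 1)
    (h : Tendsto (fun n => ⟪x' n, T (y' n)⟫_ℂ) atTop (nhds c)) :
    Tendsto (fun n => ⟪x n, T (y n)⟫_ℂ) atTop (nhds c) := by
  have hdiff : Tendsto (fun n => ⟪x n, T (y n)⟫_ℂ - ⟪x' n, T (y' n)⟫_ℂ) atTop (nhds 0) := by
    apply squeeze_zero_norm
      (a := fun n => ‖x n - x' n‖ * (‖T‖ * (1 + ‖y n - y' n‖)) + 1 * (‖T‖ * ‖y n - y' n‖)) ?_ ?_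
    · intro n
      refine (aux_cross T _ _ _ _).trans ?_
      have h1 : ‖y n‖ ≤ 1 + ‖y n - y' n‖ := by
        calc ‖y n‖ = ‖y' n + (y n - y' n)‖ := by rw [add_sub_cancel]
          _ ≤ ‖y' n‖ + ‖y n - y' n‖ := norm_add_le _ _
          _ ≤ 1 + ‖y n - y' n‖ := by gcongr; exact hy' n
      have h2 : ‖x n - x' n‖ * (‖T‖ * ‖y n‖) ≤ ‖x n - x' n‖ * (‖T‖ * (1 + ‖y n - y' n‖)) := by
        gcongr
      have h3 : ‖x' n‖ * (‖T‖ * ‖y n - y' n‖) ≤ 1 * (‖T‖ * ‖y n - y' n‖) :=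
        mul_le_mul_of_nonneg_right (hx' n) (by positivity)
      show _ ≤ ‖x n - x' n‖ * (‖T‖ * (1 + ‖y n - y' n‖)) + 1 * (‖T‖ * ‖y n - y' n‖)
      exact add_le_add h2 h3
    · have hxn := hx.norm
      have hyn := hy.norm
      simp only [norm_zero] at hxn hyn
      have := (hxn.mul (((tendsto_const_nhds (x := (1:ℝ))).add hyn).const_mul ‖T‖)).add
        ((hyn.const_mul ‖T‖).const_mul 1)
      simpa using this
  have := hdiff.add h
  simpa using this

lemma aux_normalize {g : ℕ → H} (hn : Tendsto (fun n => ‖g n‖) atTop (nhds 1)) :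
    Tendsto (fun n => ((‖g n‖⁻¹ : ℝ) : ℂ)) atTop (nhds 1) := by
  have := (hn.inv₀ one_ne_zero)
  have h2 := (Complex.continuous_ofReal.tendsto _).comp this
  simpa [Function.comp_def] using h2


lemma aux_main [CompleteSpace H] (T : H →L[ℂ] H) (M : Submodule ℂ H)
    (hMc : IsClosed (M : Set H)) (hMf : FiniteDimensional ℂ ↥Mᗮ)
    {c : ℂ} (hc : c ∈ essNumRange T) {a : H} (haM : a ∈ M) (ha : a = 0 ∨ ‖a‖ = 1)
    {ε : ℝ} (hε : 0 < ε) :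
    ∃ b : H, b ∈ M ∧ ‖b‖ = 1 ∧ ⟪a, b⟫_ℂ = 0 ∧ ‖⟪b, T b⟫_ℂ - c‖ < ε ∧
      ‖⟪a, T b⟫_ℂ‖ < ε ∧ ‖⟪b, T a⟫_ℂ‖ < ε := by
  obtain ⟨f, hf, hfc⟩ := hc
  haveI : CompleteSpace M := hMc.completeSpace_coe
  have ha1 : ‖a‖ ≤ 1 := by rcases ha with h | h <;> simp [h]
  have haa : a = 0 ∨ ⟪a, a⟫_ℂ = 1 := by
    rcases ha with h | h
    · exact Or.inl h
    · right; rw [inner_self_eq_norm_sq_to_K, h]; norm_num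
  set p : ℕ → H := fun m => f m - (Submodule.orthogonalProjectionOnto Mᗮ (f m) : H) with hp
  have hpM : ∀ m, p m ∈ M := by
    intro m
    have h1 := Submodule.sub_starProjection_mem_orthogonal (K := Mᗮ) (f m)
    rwa [Submodule.orthogonal_orthogonal] at h1
  have hpf : Tendsto (fun m => p m - f m) atTop (nhds 0) := by
    have h1 := (aux_proj_null hf Mᗮ).neg
    simp only [neg_zero] at h1
    have : (fun m => p m - f m) = fun m => -((Submodule.orthogonalProjectionOnto Mᗮ (f m) : H)) := by
      funext m; simp [hp]
    rw [this]; exact h1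
  have hiap : Tendsto (fun m => ⟪a, p m⟫_ℂ) atTop (nhds 0) := by
    have h1 : Tendsto (fun m => ⟪a, p m - f m⟫_ℂ) atTop (nhds 0) := by
      have h2 := ((innerSL ℂ a).continuous.tendsto 0).comp hpf
      simpa [Function.comp_def, inner_sub_right] using h2
    have h2 := (aux_weak_null' hf a).add h1
    simp only [add_zero] at h2
    have : (fun m => ⟪a, p m⟫_ℂ) = fun m => ⟪a, f m⟫_ℂ + ⟪a, p m - f m⟫_ℂ := by
      funext m; simp only [inner_sub_right]; ring
    rw [this]; exact h2
  set q : ℕ → H := fun m => p m - ⟪a, p m⟫_ℂ • a with hq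
  have hqM : ∀ m, q m ∈ M := fun m => M.sub_mem (hpM m) (M.smul_mem _ haM)
  have hqa0 : ∀ m, ⟪a, q m⟫_ℂ = 0 := by
    intro m
    rcases haa with h | h
    · simp [hq, h]
    · simp only [hq, inner_sub_right, inner_smul_right, h]; ring
  have hqf : Tendsto (fun m => q m - f m) atTop (nhds 0) := by
    have h1 := hpf.sub (hiap.smul_const a)
    simp only [smul_zero, sub_zero, zero_smul] at h1
    have : (fun m => q m - f m) = fun m => (p m - f m) - ⟪a, p m⟫_ℂ • a := by
      funext m; simp [hq]; abel
    rw [this]; simpa using h1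
  have hqn : Tendsto (fun m => ‖q m‖) atTop (nhds 1) := by
    have h1 : Tendsto (fun m => ‖q m‖ - ‖f m‖) atTop (nhds 0) := by
      apply squeeze_zero_norm (a := fun m => ‖q m - f m‖)
      · intro m; simpa [Real.norm_eq_abs] using abs_norm_sub_norm_le (q m) (f m)
      · have := hqf.norm; simpa using this
    have : (fun m => ‖q m‖) = fun m => (‖q m‖ - ‖f m‖) + 1 := by
      funext m; rw [hf.1 m]; ring
    rw [this]
    simpa using h1.add (tendsto_const_nhds (x := (1:ℝ)))
  have hfb : ∀ m, ‖f m‖ ≤ 1 := fun m => le_of_eq (hf.1 m)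
  have hab : ∀ _m : ℕ, ‖a‖ ≤ 1 := fun _ => ha1
  have hconst : Tendsto (fun _m : ℕ => a - a) atTop (nhds (0 : H)) := by
    simpa using tendsto_const_nhds (x := (0:H))
  -- limits for q
  have hqq : Tendsto (fun m => ⟪q m, T (q m)⟫_ℂ) atTop (nhds c) :=
    aux_inner_lim T hqf hqf hfb hfb hfc
  have haTq : Tendsto (fun m => ⟪a, T (q m)⟫_ℂ) atTop (nhds 0) := by
    refine aux_inner_lim T hconst hqf hab hfb ?_
    have h1 : (fun m => ⟪a, T (f m)⟫_ℂ) = fun m => ⟪(ContinuousLinearMap.adjoint T) a, f m⟫_ℂ := by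
      funext m; rw [ContinuousLinearMap.adjoint_inner_left]
    rw [h1]
    exact aux_weak_null' hf _
  have hqTa : Tendsto (fun m => ⟪q m, T a⟫_ℂ) atTop (nhds 0) :=
    aux_inner_lim T hqf hconst hfb hab (aux_weak_null hf (T a))
  -- normalized sequence
  set r : ℕ → ℂ := fun m => ((‖q m‖⁻¹ : ℝ) : ℂ) with hr
  have hr1 : Tendsto r atTop (nhds 1) := aux_normalize hqn
  set b' : ℕ → H := fun m => r m • q m with hb'
  have hbb : Tendsto (fun m => ⟪b' m, T (b' m)⟫_ℂ) atTop (nhds c) := by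
    have h1 : ∀ m, ⟪b' m, T (b' m)⟫_ℂ = r m * (r m * ⟪q m, T (q m)⟫_ℂ) := by
      intro m
      simp [hb', hr, inner_smul_left, inner_smul_right, Complex.conj_ofReal, mul_comm]
    simp only [h1]
    have := hr1.mul (hr1.mul hqq)
    simpa using this
  have hbTa : Tendsto (fun m => ⟪b' m, T a⟫_ℂ) atTop (nhds 0) := by
    have h1 : ∀ m, ⟪b' m, T a⟫_ℂ = r m * ⟪q m, T a⟫_ℂ := by
      intro m; simp [hb', hr, inner_smul_left, Complex.conj_ofReal, mul_comm]
    simp only [h1]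
    simpa using hr1.mul hqTa
  have haTb : Tendsto (fun m => ⟪a, T (b' m)⟫_ℂ) atTop (nhds 0) := by
    have h1 : ∀ m, ⟪a, T (b' m)⟫_ℂ = r m * ⟪a, T (q m)⟫_ℂ := by
      intro m; simp [hb', hr, inner_smul_right]
    simp only [h1]
    simpa using hr1.mul haTq
  -- choose a good index
  have E1 : ∀ᶠ m in atTop, (1:ℝ)/2 < ‖q m‖ := hqn.eventually (eventually_gt_nhds (by norm_num))
  have E2 : ∀ᶠ m in atTop, ‖⟪b' m, T (b' m)⟫_ℂ - c‖ < ε := by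
    have := hbb.eventually (Metric.ball_mem_nhds c hε)
    simpa [Metric.mem_ball, Complex.dist_eq] using this
  have E3 : ∀ᶠ m in atTop, ‖⟪a, T (b' m)⟫_ℂ‖ < ε := by
    have := haTb.eventually (Metric.ball_mem_nhds 0 hε)
    simpa [Metric.mem_ball, Complex.dist_eq] using this
  have E4 : ∀ᶠ m in atTop, ‖⟪b' m, T a⟫_ℂ‖ < ε := by
    have := hbTa.eventually (Metric.ball_mem_nhds 0 hε)
    simpa [Metric.mem_ball, Complex.dist_eq] using this
  obtain ⟨m, ⟨⟨hm1, hm2⟩, hm3⟩, hm4⟩ := (((E1.and E2).and E3).and E4).exists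
  have hq0 : ‖q m‖ ≠ 0 := by linarith
  refine ⟨b' m, M.smul_mem _ (hqM m), ?_, ?_, hm2, hm3, hm4⟩
  · have : ‖b' m‖ = ‖r m‖ * ‖q m‖ := norm_smul _ _
    rw [this]
    simp only [hr, Complex.norm_real, Real.norm_eq_abs, abs_inv, abs_norm]
    field_simp
  · simp [hb', inner_smul_right, hqa0 m]


end Aux

open Filter in
set_option linter.unusedVariables false in
set_option maxHeartbeats 1000000 in
theorem stmt9 {H : Type*} [NormedAddCommGroup H] [InnerProductSpace ℂ H] [CompleteSpace H]
    [TopologicalSpace.SeparableSpace H] (hinf : ¬ FiniteDimensional ℂ H)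
    (T : H →L[ℂ] H)
    (hT : ¬ ∃ (lam : ℂ) (K : H →L[ℂ] H), IsCompactOperator K ∧ T = lam • (1 : H →L[ℂ] H) + K)
    (C D : ℝ) (hC0 : 0 < C) (hC : C < Metric.diam (essNumRange T) / (4 * Real.sqrt 2))
    (hD0 : 0 < D) (hD : D < Metric.diam (essNumRange T) / 4)
    (M : Submodule ℂ H) (hMc : IsClosed (M : Set H)) (hMf : FiniteDimensional ℂ ↥Mᗮ) :
    ∃ u : H, u ∈ M ∧ ‖u‖ = 1 ∧
      D ≤ ‖⟪u, T u⟫_ℂ‖ ∧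
      C ≤ ‖T u - ⟪u, T u⟫_ℂ • u‖ ∧
      C ≤ ‖ContinuousLinearMap.adjoint T u - ⟪u, ContinuousLinearMap.adjoint T u⟫_ℂ • u‖ := by
  classical
  set S := essNumRange T with hS
  set d := Metric.diam S with hdd
  set s2 := Real.sqrt 2 with hs2
  set s3 := Real.sqrt 3 with hs3
  have hs2sq : s2 ^ 2 = 2 := Real.sq_sqrt (by norm_num)
  have hs3sq : s3 ^ 2 = 3 := Real.sq_sqrt (by norm_num)
  have hs2nn : 0 ≤ s2 := Real.sqrt_nonneg 2
  have hs3nn : 0 ≤ s3 := Real.sqrt_nonneg 3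
  have hs2pos : 0 < s2 := Real.sqrt_pos.2 (by norm_num)
  have hs3le : s3 ≤ 2 := by nlinarith
  have hs3ge : 1 ≤ s3 := by nlinarith
  have hs2le : s2 ≤ 2 := by nlinarith
  have hd0 : 0 < d := by
    have h4 : 0 < 4 * s2 := by linarith
    have := hC0.trans hC
    calc (0:ℝ) = (4 * s2) * 0 := by ring
      _ < (4 * s2) * (d / (4 * s2)) := by exact mul_lt_mul_of_pos_left this h4
      _ = d := by field_simp
  -- the margin
  set ε := min ((d/4 - D)/8) ((s3 * d/4 - C)/8) with hε
  have hmD : 0 < (d/4 - D)/8 := by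
    have : D < d/4 := by rw [hdd]; linarith [hD]
    linarith
  have hs2ge : 1 ≤ s2 := by nlinarith
  have hmC : 0 < (s3 * d/4 - C)/8 := by
    have h1 : C < d / (4 * s2) := hC
    have h6 : 1 ≤ s3 * s2 := by nlinarith
    have h2 : d / (4 * s2) ≤ s3 * d / 4 := by
      rw [div_le_div_iff₀ (by linarith) (by norm_num)]
      nlinarith [mul_nonneg (by linarith : (0:ℝ) ≤ s3*s2 - 1) hd0.le]
    linarith
  have hε0 : 0 < ε := lt_min hmD hmC
  have hεD : ε ≤ (d/4 - D)/8 := min_le_left _ _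
  have hεC : ε ≤ (s3 * d/4 - C)/8 := min_le_right _ _
  have hεd : ε < d := by nlinarith
  -- find two far-apart points of S
  have hpair : ∃ l ∈ S, ∃ m ∈ S, d - ε < dist l m := by
    by_contra hcon
    push_neg at hcon
    have : Metric.diam S ≤ d - ε := by
      apply Metric.diam_le_of_forall_dist_le (by linarith)
      intro x hx y hy
      exact hcon x hx y hy
    rw [← hdd] at this
    linarith
  obtain ⟨l0, hl0, m0, hm0, hlm0⟩ := hpair
  -- order them so that ‖3l+m‖ is big
  have hsum : 2 * ‖l0 - m0‖ ≤ ‖3*l0 + m0‖ + ‖3*m0 + l0‖ := by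
    have h1 : ‖(3*l0 + m0) - (3*m0 + l0)‖ ≤ ‖3*l0 + m0‖ + ‖3*m0 + l0‖ := norm_sub_le _ _
    have h2 : (3*l0 + m0) - (3*m0 + l0) = (2:ℂ) * (l0 - m0) := by ring
    rw [h2] at h1
    simpa [norm_mul] using h1
  have key : ∃ l ∈ S, ∃ m ∈ S, d - ε < ‖l - m‖ ∧ ‖l - m‖ ≤ ‖3*l + m‖ := by
    rcases le_total ‖3*l0 + m0‖ ‖3*m0 + l0‖ with h | h
    · refine ⟨m0, hm0, l0, hl0, ?_, ?_⟩
      · rw [← dist_eq_norm, dist_comm]; exact hlm0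
      · rw [norm_sub_rev l0 m0] at hsum; linarith
    · refine ⟨l0, hl0, m0, hm0, ?_, ?_⟩
      · rw [← dist_eq_norm]; exact hlm0
      · linarith
  obtain ⟨l, hlS, m, hmS, hdist, hbig⟩ := key
  -- first vector
  obtain ⟨a, haM, han, -, hα, -, -⟩ :=
    aux_main T M hMc hMf hlS M.zero_mem (Or.inl rfl) hε0
  -- second vector
  obtain ⟨b, hbM, hbn, hab, hβ, htab, htba⟩ :=
    aux_main T M hMc hMf hmS haM (Or.inr han) hε0
  -- notation
  set α := ⟪a, T a⟫_ℂ with hα'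
  set β := ⟪b, T b⟫_ℂ with hβ'
  set tab := ⟪a, T b⟫_ℂ with htab'
  set tba := ⟪b, T a⟫_ℂ with htba'
  have hba : ⟪b, a⟫_ℂ = 0 := by rw [← inner_conj_symm, hab, map_zero]
  have hiaa : ⟪a, a⟫_ℂ = 1 := by
    rw [inner_self_eq_norm_sq_to_K, han]; norm_num
  have hibb : ⟪b, b⟫_ℂ = 1 := by
    rw [inner_self_eq_norm_sq_to_K, hbn]; norm_num
  have hs3c : ((s3 : ℝ) : ℂ)^2 = 3 := by
    rw [← Complex.ofReal_pow, hs3sq]; norm_num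
  -- build u and v
  set u : H := ((s3/2 : ℝ) : ℂ) • a + ((1/2 : ℝ) : ℂ) • b with hu
  set v : H := ((-(1/2) : ℝ) : ℂ) • a + ((s3/2 : ℝ) : ℂ) • b with hv
  have huM : u ∈ M := M.add_mem (M.smul_mem _ haM) (M.smul_mem _ hbM)
  have huu : ⟪u, u⟫_ℂ = 1 := by
    simp only [hu, inner_add_left, inner_add_right, inner_smul_left, inner_smul_right,
      Complex.conj_ofReal, hiaa, hibb, hab, hba]
    push_cast
    linear_combination (hs3c) / 4
  have hvv : ⟪v, v⟫_ℂ = 1 := by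
    simp only [hv, inner_add_left, inner_add_right, inner_smul_left, inner_smul_right,
      Complex.conj_ofReal, hiaa, hibb, hab, hba]
    push_cast
    linear_combination (hs3c) / 4
  have hvu : ⟪v, u⟫_ℂ = 0 := by
    simp only [hu, hv, inner_add_left, inner_add_right, inner_smul_left, inner_smul_right,
      Complex.conj_ofReal, hiaa, hibb, hab, hba]
    push_cast
    ring
  have norm_eq_one_of_inner : ∀ w : H, ⟪w, w⟫_ℂ = 1 → ‖w‖ = 1 := by
    intro w hw
    have h1 := inner_self_eq_norm_sq_to_K (𝕜 := ℂ) w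
    rw [hw] at h1
    have h3 : ((‖w‖^2 : ℝ) : ℂ) = ((1:ℝ) : ℂ) := by push_cast; exact h1.symm
    have h2 : (‖w‖ : ℝ)^2 = 1 := Complex.ofReal_inj.mp h3
    have h3 : (‖w‖ - 1) * (‖w‖ + 1) = 0 := by nlinarith
    rcases mul_eq_zero.1 h3 with h | h
    · linarith
    · have := norm_nonneg w; linarith
  have hun : ‖u‖ = 1 := norm_eq_one_of_inner u huu
  have hvn : ‖v‖ = 1 := norm_eq_one_of_inner v hvv
  -- key identities
  have hTu : T u = ((s3/2 : ℝ) : ℂ) • T a + ((1/2 : ℝ) : ℂ) • T b := by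
    rw [hu]; simp [map_add, map_smul]
  have hTv : T v = ((-(1/2) : ℝ) : ℂ) • T a + ((s3/2 : ℝ) : ℂ) • T b := by
    rw [hv]; simp [map_add, map_smul]
  have hutu : ⟪u, T u⟫_ℂ
      = ((3/4 : ℝ) : ℂ) * α + ((1/4 : ℝ) : ℂ) * β + (((s3 : ℝ) : ℂ)/4) * (tab + tba) := by
    simp only [hTu, hu, map_add, map_smul, inner_add_left, inner_add_right, inner_smul_left, inner_smul_right,
      Complex.conj_ofReal, ← hα', ← hβ', ← htab', ← htba']
    push_cast
    linear_combination (α/4) * hs3c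
  have hvtu : ⟪v, T u⟫_ℂ
      = (((s3 : ℝ) : ℂ)/4) * (β - α) + ((3/4 : ℝ) : ℂ) * tba - ((1/4 : ℝ) : ℂ) * tab := by
    simp only [hTu, hv, inner_add_left, inner_add_right, inner_smul_left, inner_smul_right,
      Complex.conj_ofReal, ← hα', ← hβ', ← htab', ← htba']
    push_cast
    linear_combination (tba/4) * hs3c
  have hutv : ⟪u, T v⟫_ℂ
      = (((s3 : ℝ) : ℂ)/4) * (β - α) + ((3/4 : ℝ) : ℂ) * tab - ((1/4 : ℝ) : ℂ) * tba := by
    simp only [hTv, hu, inner_add_left, inner_add_right, inner_smul_left, inner_smul_right,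
      Complex.conj_ofReal, ← hα', ← hβ', ← htab', ← htba']
    push_cast
    linear_combination (tab/4) * hs3c
  -- norm helpers
  have nr : ∀ x : ℝ, 0 ≤ x → ‖((x:ℝ):ℂ)‖ = x := fun x hx => by
    rw [Complex.norm_real, Real.norm_eq_abs, abs_of_nonneg hx]
  have term : ∀ (x : ℝ) (z : ℂ), 0 ≤ x → ‖z‖ ≤ ε → ‖((x:ℝ):ℂ) * z‖ ≤ x * ε := by
    intro x z hx hz
    rw [norm_mul, nr x hx]
    exact mul_le_mul_of_nonneg_left hz hx
  have hεnn : (0:ℝ) ≤ ε := hε0.le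
  have hmlα : ‖l - α‖ ≤ ε := by rw [norm_sub_rev]; exact hα.le
  have hmlβ : ‖m - β‖ ≤ ε := by rw [norm_sub_rev]; exact hβ.le
  have hntab : ‖-tab‖ ≤ ε := by rw [norm_neg]; exact htab.le
  have hs3ε : s3 * ε ≤ 2 * ε := mul_le_mul_of_nonneg_right hs3le hεnn
  -- bound for the D-part
  have hidD : ⟪u, T u⟫_ℂ - (3*l + m)/4
      = ((3/4:ℝ):ℂ) * (α - l) + (((1/4:ℝ):ℂ) * (β - m)
        + (((s3/4:ℝ):ℂ) * tab + ((s3/4:ℝ):ℂ) * tba)) := by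
    rw [hutu]; push_cast; ring
  have hDb : ‖⟪u, T u⟫_ℂ - (3*l + m)/4‖ ≤ 3/4*ε + (1/4*ε + (s3/4*ε + s3/4*ε)) := by
    rw [hidD]
    refine le_trans (norm_add_le _ _) (add_le_add (term _ _ (by norm_num) hα.le) ?_)
    refine le_trans (norm_add_le _ _) (add_le_add (term _ _ (by norm_num) hβ.le) ?_)
    refine le_trans (norm_add_le _ _)
      (add_le_add (term _ _ (by linarith) htab.le) (term _ _ (by linarith) htba.le))
  have hZD : (d - ε)/4 ≤ ‖(3*l + m)/4‖ := by
    have h1 : ‖(3*l + m)/4‖ = ‖3*l + m‖/4 := by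
      rw [norm_div]; norm_num
    rw [h1]
    have : d - ε ≤ ‖3*l + m‖ := le_trans hdist.le hbig
    linarith
  have hDgoal : D ≤ ‖⟪u, T u⟫_ℂ‖ := by
    have h1 : ‖(3*l + m)/4‖ - ‖⟪u, T u⟫_ℂ‖ ≤ ‖⟪u, T u⟫_ℂ - (3*l + m)/4‖ := by
      have := norm_sub_norm_le ((3*l + m)/4) (⟪u, T u⟫_ℂ)
      rwa [norm_sub_rev] at this
    nlinarith
  -- bound for the C-parts
  have hidC : ⟪v, T u⟫_ℂ - ((s3/4:ℝ):ℂ) * (m - l)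
      = ((s3/4:ℝ):ℂ) * (β - m) + (((s3/4:ℝ):ℂ) * (l - α)
        + (((3/4:ℝ):ℂ) * tba + ((1/4:ℝ):ℂ) * (-tab))) := by
    rw [hvtu]; push_cast; ring
  have hidC2 : ⟪u, T v⟫_ℂ - ((s3/4:ℝ):ℂ) * (m - l)
      = ((s3/4:ℝ):ℂ) * (β - m) + (((s3/4:ℝ):ℂ) * (l - α)
        + (((1/4:ℝ):ℂ) * (-tba) + ((3/4:ℝ):ℂ) * tab)) := by
    rw [hutv]; push_cast; ring
  have hntba : ‖-tba‖ ≤ ε := by rw [norm_neg]; exact htba.le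
  have hCb : ‖⟪v, T u⟫_ℂ - ((s3/4:ℝ):ℂ) * (m - l)‖ ≤ s3/4*ε + (s3/4*ε + (3/4*ε + 1/4*ε)) := by
    rw [hidC]
    refine le_trans (norm_add_le _ _) (add_le_add (term _ _ (by linarith) hβ.le) ?_)
    refine le_trans (norm_add_le _ _) (add_le_add (term _ _ (by linarith) hmlα) ?_)
    refine le_trans (norm_add_le _ _)
      (add_le_add (term _ _ (by norm_num) htba.le) (term _ _ (by norm_num) hntab))
  have hCb2 : ‖⟪u, T v⟫_ℂ - ((s3/4:ℝ):ℂ) * (m - l)‖ ≤ s3/4*ε + (s3/4*ε + (1/4*ε + 3/4*ε)) := by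
    rw [hidC2]
    refine le_trans (norm_add_le _ _) (add_le_add (term _ _ (by linarith) hβ.le) ?_)
    refine le_trans (norm_add_le _ _) (add_le_add (term _ _ (by linarith) hmlα) ?_)
    refine le_trans (norm_add_le _ _)
      (add_le_add (term _ _ (by norm_num) hntba) (term _ _ (by norm_num) htab.le))
  have hZC : s3 * (d - ε)/4 ≤ ‖((s3/4:ℝ):ℂ) * (m - l)‖ := by
    rw [norm_mul, nr _ (by linarith)]
    have h1 : ‖m - l‖ = ‖l - m‖ := norm_sub_rev _ _
    have h2 : d - ε ≤ ‖m - l‖ := by rw [h1]; exact hdist.le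
    have := mul_le_mul_of_nonneg_left h2 (by linarith : (0:ℝ) ≤ s3/4)
    linarith
  have hCnum : C + (s3/4*ε + (s3/4*ε + (3/4*ε + 1/4*ε))) ≤ s3 * (d - ε)/4 := by
    have h8 : 8 * ε ≤ s3 * d/4 - C := by linarith
    nlinarith
  have hClow : ∀ z : ℂ, ‖z - ((s3/4:ℝ):ℂ) * (m - l)‖ ≤ s3/4*ε + (s3/4*ε + (3/4*ε + 1/4*ε)) →
      C ≤ ‖z‖ := by
    intro z hz
    have h1 : ‖((s3/4:ℝ):ℂ) * (m - l)‖ - ‖z‖ ≤ ‖z - ((s3/4:ℝ):ℂ) * (m - l)‖ := by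
      have := norm_sub_norm_le (((s3/4:ℝ):ℂ) * (m - l)) z
      rwa [norm_sub_rev] at this
    linarith
  have hCgoal1 : C ≤ ‖T u - ⟪u, T u⟫_ℂ • u‖ := by
    have hvi : ⟪v, T u - ⟪u, T u⟫_ℂ • u⟫_ℂ = ⟪v, T u⟫_ℂ := by
      rw [inner_sub_right, inner_smul_right, hvu]; ring
    have h1 : ‖⟪v, T u - ⟪u, T u⟫_ℂ • u⟫_ℂ‖ ≤ ‖T u - ⟪u, T u⟫_ℂ • u‖ := by
      have := norm_inner_le_norm (𝕜 := ℂ) v (T u - ⟪u, T u⟫_ℂ • u)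
      rwa [hvn, one_mul] at this
    rw [hvi] at h1
    exact le_trans (hClow _ hCb) h1
  have hCgoal2 : C ≤ ‖ContinuousLinearMap.adjoint T u
      - ⟪u, ContinuousLinearMap.adjoint T u⟫_ℂ • u‖ := by
    have hvi : ⟪v, ContinuousLinearMap.adjoint T u
        - ⟪u, ContinuousLinearMap.adjoint T u⟫_ℂ • u⟫_ℂ
        = ⟪v, ContinuousLinearMap.adjoint T u⟫_ℂ := by
      rw [inner_sub_right, inner_smul_right, hvu]; ring
    have hadj : ⟪v, ContinuousLinearMap.adjoint T u⟫_ℂ = ⟪T v, u⟫_ℂ :=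
      ContinuousLinearMap.adjoint_inner_right T v u
    have h1 : ‖⟪v, ContinuousLinearMap.adjoint T u
        - ⟪u, ContinuousLinearMap.adjoint T u⟫_ℂ • u⟫_ℂ‖
        ≤ ‖ContinuousLinearMap.adjoint T u - ⟪u, ContinuousLinearMap.adjoint T u⟫_ℂ • u‖ := by
      have := norm_inner_le_norm (𝕜 := ℂ) v
        (ContinuousLinearMap.adjoint T u - ⟪u, ContinuousLinearMap.adjoint T u⟫_ℂ • u)
      rwa [hvn, one_mul] at this
    rw [hvi, hadj] at h1
    have h2 : ‖⟪T v, u⟫_ℂ‖ = ‖⟪u, T v⟫_ℂ‖ := norm_inner_symm _ _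
    rw [h2] at h1
    have h3 : C ≤ ‖⟪u, T v⟫_ℂ‖ := by
      apply hClow _ ?_
      refine le_trans hCb2 ?_
      linarith
    exact le_trans h3 h1
  exact ⟨u, huM, hun, hDgoal, hCgoal1, hCgoal2⟩
end

section
/- Let H be a complex separable infinite-dimensional Hilbert space and let T be a bounded selfadjoint linear operator on H, so that W_e(T) ⊆ ℝ. Let (λ_n)_{n=1}^∞ be a sequence of real numbers lying in the interior, relative to ℝ, of the set W_{e,ℝ}(T) = {t ∈ ℝ : t ∈ W_e(T)}, and suppose ∑_{n=1}^∞ dist(λ_n, ∂_ℝ W_{e,ℝ}(T)) = ∞, where ∂_ℝ denotes the boundary in ℝ. Then for every K ∈ ℕ there exists an orthonormal basis (u_n)_{n=1}^∞ of H such that ⟨T u_n, u_n⟩ = λ_n for all n ∈ ℕ, and ⟨T u_n, u_j⟩ = 0 whenever 1 ≤ |n − j| ≤ K. -/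
set_option linter.unusedSectionVars false
set_option linter.unusedVariables false
set_option linter.unnecessarySeqFocus false
set_option maxHeartbeats 1000000


open scoped InnerProductSpace

open Filter Finset

section Aux
variable {H : Type*} [NormedAddCommGroup H] [InnerProductSpace ℂ H]

lemma inner_quad_diff (T : H →L[ℂ] H) (x y : H) :
    ‖⟪x, T x⟫_ℂ - ⟪y, T y⟫_ℂ‖ ≤ ‖T‖ * ((‖x‖ + ‖y‖) * ‖x - y‖) := by
  have h : ⟪x, T x⟫_ℂ - ⟪y, T y⟫_ℂ = ⟪x - y, T x⟫_ℂ + ⟪y, T (x - y)⟫_ℂ := by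
    simp only [inner_sub_left, map_sub, inner_sub_right]; ring
  rw [h]
  calc ‖⟪x - y, T x⟫_ℂ + ⟪y, T (x - y)⟫_ℂ‖
      ≤ ‖⟪x - y, T x⟫_ℂ‖ + ‖⟪y, T (x - y)⟫_ℂ‖ := norm_add_le _ _
    _ ≤ ‖x - y‖ * ‖T x‖ + ‖y‖ * ‖T (x - y)‖ := by
        gcongr <;> exact norm_inner_le_norm _ _
    _ ≤ ‖x - y‖ * (‖T‖ * ‖x‖) + ‖y‖ * (‖T‖ * ‖x - y‖) := by
        gcongr <;> [exact T.le_opNorm x; exact T.le_opNorm (x - y)]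
    _ = ‖T‖ * ((‖x‖ + ‖y‖) * ‖x - y‖) := by ring

lemma weak_null {e : ℕ → H} (he : Orthonormal ℂ e) (y : H) :
    Tendsto (fun n => ⟪y, e n⟫_ℂ) atTop (nhds 0) := by
  have hs : Summable fun n => ‖⟪e n, y⟫_ℂ‖ ^ 2 := he.inner_products_summable (x := y)
  have h1 : Tendsto (fun n => ‖⟪e n, y⟫_ℂ‖ ^ 2) atTop (nhds 0) := hs.tendsto_atTop_zero
  have h2 : Tendsto (fun n => ‖⟪e n, y⟫_ℂ‖) atTop (nhds 0) := by
    have := (Real.continuous_sqrt.tendsto 0).comp h1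
    simpa [Function.comp_def, Real.sqrt_sq (norm_nonneg _)] using this
  rw [tendsto_zero_iff_norm_tendsto_zero]
  simpa [← norm_inner_symm] using h2

lemma value_bound (T : H →L[ℂ] H) {x : H} (hx : ‖x‖ = 1) : ‖⟪x, T x⟫_ℂ‖ ≤ ‖T‖ := by
  calc ‖⟪x, T x⟫_ℂ‖ ≤ ‖x‖ * ‖T x‖ := norm_inner_le_norm _ _
    _ ≤ ‖x‖ * (‖T‖ * ‖x‖) := by gcongr; exact T.le_opNorm x
    _ = ‖T‖ := by rw [hx]; ring

lemma essNumRange_bound {T : H →L[ℂ] H} {z : ℂ} (hz : z ∈ essNumRange T) : ‖z‖ ≤ ‖T‖ := by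
  obtain ⟨e, he, hten⟩ := hz
  exact le_of_tendsto hten.norm (Eventually.of_forall fun n => value_bound T (he.1 n))

lemma exists_unit_perp [CompleteSpace H] (hinf : ¬ FiniteDimensional ℂ H) (V : Finset H) :
    ∃ w : H, ‖w‖ = 1 ∧ ∀ y ∈ V, ⟪y, w⟫_ℂ = 0 := by
  classical
  set U : Submodule ℂ H := Submodule.span ℂ (V : Set H) with hU
  have hfd : FiniteDimensional ℂ U := inferInstance
  have hne : Uᗮ ≠ ⊥ := by
    intro h
    have htop : U = ⊤ := Submodule.orthogonal_eq_bot_iff.mp h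
    exact hinf (Module.Finite.equiv (LinearEquiv.ofTop U htop))
  obtain ⟨x, hxU, hx0⟩ := Submodule.exists_mem_ne_zero_of_ne_bot hne
  refine ⟨(‖x‖ : ℂ)⁻¹ • x, ?_, ?_⟩
  · rw [norm_smul]
    simp [norm_ne_zero_iff.mpr hx0]
  · intro y hy
    rw [inner_smul_right]
    have := (Submodule.mem_orthogonal U x).mp hxU y (Submodule.subset_span hy)
    rw [this, mul_zero]

end Aux


section Aux2
variable {H : Type*} [NormedAddCommGroup H] [InnerProductSpace ℂ H] [CompleteSpace H]

lemma symm_inner {T : H →L[ℂ] H} (hsa : IsSelfAdjoint T) (x y : H) :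
    ⟪T x, y⟫_ℂ = ⟪x, T y⟫_ℂ :=
  (ContinuousLinearMap.isSelfAdjoint_iff_isSymmetric.mp hsa) x y

lemma re_value {T : H →L[ℂ] H} (hsa : IsSelfAdjoint T) (x : H) :
    ⟪x, T x⟫_ℂ = ((⟪x, T x⟫_ℂ).re : ℂ) := by
  have h : (starRingEnd ℂ) ⟪x, T x⟫_ℂ = ⟪x, T x⟫_ℂ := by
    calc (starRingEnd ℂ) ⟪x, T x⟫_ℂ = ⟪T x, x⟫_ℂ := inner_conj_symm _ _
      _ = ⟪x, T x⟫_ℂ := symm_inner hsa x x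
  exact (Complex.conj_eq_iff_re.mp h).symm

/-- Lemma B: approximate a point of the essential numerical range by a unit vector
orthogonal to a prescribed finite set. -/
lemma approx_value (hinf : ¬ FiniteDimensional ℂ H) (T : H →L[ℂ] H) {a : ℂ}
    (ha : a ∈ essNumRange T) (V : Finset H) {ε : ℝ} (hε : 0 < ε) :
    ∃ e : H, ‖e‖ = 1 ∧ (∀ y ∈ V, ⟪y, e⟫_ℂ = 0) ∧ ‖⟪e, T e⟫_ℂ - a‖ < ε := by
  classical
  obtain ⟨es, hon, hten⟩ := ha
  set U : Submodule ℂ H := Submodule.span ℂ (V : Set H) with hUdef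
  have hfd : FiniteDimensional ℂ U := inferInstance
  set b := stdOrthonormalBasis ℂ U
  -- the projections of the orthonormal sequence onto U tend to 0
  have hP : Tendsto (fun n => ((U.orthogonalProjectionOnto (es n) : U) : H)) atTop (nhds 0) := by
    have heq : ∀ n, ((U.orthogonalProjectionOnto (es n) : U) : H)
        = ∑ i, ⟪(b i : H), es n⟫_ℂ • (b i : H) := by
      intro n
      rw [b.orthogonalProjectionOnto_apply_eq_sum]
      push_cast
      rfl
    simp only [heq]
    have hsum : Tendsto (fun n => ∑ i, ⟪(b i : H), es n⟫_ℂ • (b i : H)) atTop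
        (nhds (∑ i : Fin (Module.finrank ℂ U), (0 : H))) := by
      apply tendsto_finset_sum
      intro i _
      have h0 := weak_null hon ((b i : H))
      have := h0.smul_const ((b i : H))
      simpa using this
    simpa using hsum
  have hPn : Tendsto (fun n => ‖((U.orthogonalProjectionOnto (es n) : U) : H)‖) atTop (nhds 0) := by
    simpa using hP.norm
  set δ := min (1/2) (ε / (8 * (‖T‖ + 1)))
  have hδpos : 0 < δ := by
    apply lt_min (by norm_num)
    positivity
  have hev1 : ∀ᶠ n in atTop, ‖((U.orthogonalProjectionOnto (es n) : U) : H)‖ < δ := by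
    exact Filter.Tendsto.eventually_lt_const hδpos hPn
  have hev2 : ∀ᶠ n in atTop, ‖⟪es n, T (es n)⟫_ℂ - a‖ < ε / 2 := by
    have h' := Metric.tendsto_atTop.mp hten (ε / 2) (by positivity)
    obtain ⟨N, hN⟩ := h'
    refine eventually_atTop.mpr ⟨N, fun n hn => ?_⟩
    simpa [dist_eq_norm] using hN n hn
  obtain ⟨n, h1, h2⟩ := (hev1.and hev2).exists
  set p : H := ((U.orthogonalProjectionOnto (es n) : U) : H)
  set x : H := es n - p with hxdef
  have hxU : x ∈ Uᗮ := U.sub_starProjection_mem_orthogonal (es n)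
  have hesn : ‖es n‖ = 1 := hon.1 n
  have hxn : |‖x‖ - 1| ≤ ‖p‖ := by
    calc |‖x‖ - 1| = |‖x‖ - ‖es n‖| := by rw [hesn]
      _ ≤ ‖x - es n‖ := abs_norm_sub_norm_le _ _
      _ = ‖p‖ := by rw [hxdef, sub_sub_cancel_left, norm_neg]
  have hple : ‖p‖ < δ := h1
  have hxpos : (0:ℝ) < ‖x‖ := by
    have : δ ≤ 1/2 := min_le_left _ _
    have h3 : |‖x‖ - 1| < 1/2 := lt_of_le_of_lt hxn (lt_of_lt_of_le hple this)
    have := abs_lt.mp h3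
    linarith [this.1]
  set e : H := (‖x‖ : ℂ)⁻¹ • x with hedef
  have henorm : ‖e‖ = 1 := by
    rw [hedef, norm_smul]
    simp [ne_of_gt hxpos]
  have heclose : ‖e - es n‖ ≤ 2 * ‖p‖ := by
    have hex : ‖e - x‖ = |1 - ‖x‖| := by
      have h5 : e - x = ((‖x‖ : ℂ)⁻¹ - 1) • x := by rw [hedef, sub_smul, one_smul]
      rw [h5, norm_smul]
      have h6 : ((‖x‖:ℂ)⁻¹ - 1) = ((‖x‖⁻¹ - 1 : ℝ) : ℂ) := by push_cast; ring
      have h7 : ‖((‖x‖⁻¹ - 1 : ℝ) : ℂ)‖ = |‖x‖⁻¹ - 1| := by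
        rw [Complex.norm_real, Real.norm_eq_abs]
      rw [h6, h7]
      have h8 : |‖x‖⁻¹ - 1| * ‖x‖ = |(‖x‖⁻¹ - 1) * ‖x‖| := by
        rw [abs_mul, abs_of_pos hxpos]
      rw [h8, sub_mul, inv_mul_cancel₀ (ne_of_gt hxpos), one_mul]
    calc ‖e - es n‖ ≤ ‖e - x‖ + ‖x - es n‖ := by
          have := dist_triangle e x (es n)
          simpa [dist_eq_norm] using this
      _ = |1 - ‖x‖| + ‖p‖ := by
          rw [hex, hxdef, sub_sub_cancel_left, norm_neg]
      _ ≤ ‖p‖ + ‖p‖ := by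
          have : |1 - ‖x‖| ≤ ‖p‖ := by rw [abs_sub_comm]; exact hxn
          linarith
      _ = 2 * ‖p‖ := by ring
  refine ⟨e, henorm, ?_, ?_⟩
  · intro y hy
    rw [hedef, inner_smul_right]
    have := (Submodule.mem_orthogonal U x).mp hxU y (Submodule.subset_span hy)
    rw [this, mul_zero]
  · have hq : ‖⟪e, T e⟫_ℂ - ⟪es n, T (es n)⟫_ℂ‖ ≤ ‖T‖ * ((‖e‖ + ‖es n‖) * ‖e - es n‖) :=
      inner_quad_diff T e (es n)
    have hq2 : ‖⟪e, T e⟫_ℂ - ⟪es n, T (es n)⟫_ℂ‖ ≤ ‖T‖ * (2 * (2 * ‖p‖)) := by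
      refine le_trans hq ?_
      rw [henorm, hesn]
      gcongr
      norm_num
    have hples : ‖p‖ ≤ ε / (8 * (‖T‖ + 1)) := le_of_lt (lt_of_lt_of_le hple (min_le_right _ _))
    have hq3 : ‖T‖ * (2 * (2 * ‖p‖)) ≤ ε / 2 := by
      have hT : (0:ℝ) ≤ ‖T‖ := norm_nonneg _
      have h4 : ‖T‖ * (2 * (2 * ‖p‖)) = 4 * ‖T‖ * ‖p‖ := by ring
      rw [h4]
      calc 4 * ‖T‖ * ‖p‖ ≤ 4 * (‖T‖ + 1) * (ε / (8 * (‖T‖ + 1))) := by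
            gcongr <;> linarith
          _ = ε / 2 := by field_simp <;> ring
      
    calc ‖⟪e, T e⟫_ℂ - a‖ ≤ ‖⟪e, T e⟫_ℂ - ⟪es n, T (es n)⟫_ℂ‖ + ‖⟪es n, T (es n)⟫_ℂ - a‖ := by
          have := dist_triangle (⟪e, T e⟫_ℂ) (⟪es n, T (es n)⟫_ℂ) a
          simpa [dist_eq_norm] using this
      _ < ε / 2 + ε / 2 := add_lt_add_of_le_of_lt (le_trans hq2 hq3) h2
      _ = ε := by ring

end Aux2


section Aux3
variable {H : Type*} [NormedAddCommGroup H] [InnerProductSpace ℂ H] [CompleteSpace H]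

lemma norm_combo {v₁ v₂ : H} (h1 : ‖v₁‖ = 1) (h2 : ‖v₂‖ = 1) (h12 : ⟪v₁, v₂⟫_ℂ = 0)
    {a b : ℝ} (hab : a ^ 2 + b ^ 2 = 1) : ‖(a : ℂ) • v₁ + (b : ℂ) • v₂‖ = 1 := by
  have h21 : ⟪v₂, v₁⟫_ℂ = 0 := by rw [← inner_conj_symm, h12, map_zero]
  have hv1 : ⟪v₁, v₁⟫_ℂ = 1 := by
    rw [inner_self_eq_norm_sq_to_K, h1]; norm_num
  have hv2 : ⟪v₂, v₂⟫_ℂ = 1 := by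
    rw [inner_self_eq_norm_sq_to_K, h2]; norm_num
  have key : ⟪(a : ℂ) • v₁ + (b : ℂ) • v₂, (a : ℂ) • v₁ + (b : ℂ) • v₂⟫_ℂ = 1 := by
    rw [inner_add_left, inner_add_right, inner_add_right]
    rw [inner_smul_left, inner_smul_left, inner_smul_left, inner_smul_left]
    rw [inner_smul_right, inner_smul_right, inner_smul_right, inner_smul_right]
    rw [hv1, hv2, h12, h21]
    simp only [Complex.conj_ofReal, mul_zero, mul_one, add_zero, zero_add]
    rw [← Complex.ofReal_mul, ← Complex.ofReal_mul, ← Complex.ofReal_add]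
    rw [show a * a + b * b = a ^ 2 + b ^ 2 by ring, hab]
    norm_num
  have hn2 : ‖(a : ℂ) • v₁ + (b : ℂ) • v₂‖ ^ 2 = 1 := by
    rw [inner_self_eq_norm_sq_to_K] at key
    have h9 : ((‖(a : ℂ) • v₁ + (b : ℂ) • v₂‖ ^ 2 : ℝ) : ℂ) = ((1 : ℝ) : ℂ) := by
      push_cast
      simpa using key
    exact_mod_cast h9
  nlinarith [norm_nonneg ((a : ℂ) • v₁ + (b : ℂ) • v₂)]

lemma ivt_core (T : H →L[ℂ] H) {v₁ v₂ : H} {μ : ℝ}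
    (hl : (⟪v₁, T v₁⟫_ℂ).re ≤ μ) (hr : μ ≤ (⟪v₂, T v₂⟫_ℂ).re) :
    ∃ a b : ℝ, a ^ 2 + b ^ 2 = 1 ∧
      (⟪(a : ℂ) • v₁ + (b : ℂ) • v₂, T ((a : ℂ) • v₁ + (b : ℂ) • v₂)⟫_ℂ).re = μ := by
  set φ : ℝ → ℝ := fun θ =>
    (⟪(Real.cos θ : ℂ) • v₁ + (Real.sin θ : ℂ) • v₂,
      T ((Real.cos θ : ℂ) • v₁ + (Real.sin θ : ℂ) • v₂)⟫_ℂ).re with hφ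
  have hcont : Continuous φ := by
    apply Complex.continuous_re.comp
    have hv : Continuous fun θ : ℝ => (Real.cos θ : ℂ) • v₁ + (Real.sin θ : ℂ) • v₂ := by
      apply Continuous.add
      · exact (Complex.continuous_ofReal.comp Real.continuous_cos).smul continuous_const
      · exact (Complex.continuous_ofReal.comp Real.continuous_sin).smul continuous_const
    exact Continuous.inner hv (T.continuous.comp hv)
  have h0 : φ 0 = (⟪v₁, T v₁⟫_ℂ).re := by simp [hφ]
  have hpi : φ (Real.pi / 2) = (⟪v₂, T v₂⟫_ℂ).re := by
    simp [hφ, Real.cos_pi_div_two, Real.sin_pi_div_two]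
  have hsub : Set.Icc (φ 0) (φ (Real.pi / 2)) ⊆ φ '' Set.Icc 0 (Real.pi / 2) :=
    intermediate_value_Icc (by positivity) hcont.continuousOn
  have hμ : μ ∈ Set.Icc (φ 0) (φ (Real.pi / 2)) := by
    rw [h0, hpi]; exact ⟨hl, hr⟩
  obtain ⟨θ, _, hθ⟩ := hsub hμ
  exact ⟨Real.cos θ, Real.sin θ, by rw [← Real.sin_sq_add_cos_sq θ]; ring, hθ⟩

/-- The key construction lemma ("CAP"): produce a unit vector `u`, orthogonal to a
prescribed finite set `V`, with exact diagonal value `μ`, and prescribed component `t`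
along a unit vector `w` orthogonal to `V`. -/
lemma cap_lemma (hinf : ¬ FiniteDimensional ℂ H) {T : H →L[ℂ] H} (hsa : IsSelfAdjoint T)
    {μ δ : ℝ} (hδ : 0 < δ)
    (h₁ : ((μ - δ : ℝ) : ℂ) ∈ essNumRange T) (h₂ : ((μ + δ : ℝ) : ℂ) ∈ essNumRange T)
    (V : Finset H) {w : H} (hw : ‖w‖ = 1) (hwV : ∀ y ∈ V, ⟪y, w⟫_ℂ = 0)
    {t : ℝ} (ht0 : 0 ≤ t) (ht : t ^ 2 ≤ 1 / 2) (htδ : 8 * t ^ 2 * (‖T‖ + 1) ≤ δ) :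
    ∃ u : H, ‖u‖ = 1 ∧ ⟪u, T u⟫_ℂ = ((μ : ℝ) : ℂ) ∧
      (∀ y ∈ V, ⟪y, u⟫_ℂ = 0) ∧ ⟪w, u⟫_ℂ = ((t : ℝ) : ℂ) := by
  classical
  have hTpos : (0:ℝ) < ‖T‖ + 1 := by positivity
  -- bounds on μ
  have hμδ1 : |μ - δ| ≤ ‖T‖ := by
    have := essNumRange_bound h₁; rwa [Complex.norm_real, Real.norm_eq_abs] at this
  have hμδ2 : |μ + δ| ≤ ‖T‖ := by
    have := essNumRange_bound h₂; rwa [Complex.norm_real, Real.norm_eq_abs] at this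
  have hμ : |μ| ≤ ‖T‖ := by
    have := abs_le.mp hμδ1; have := abs_le.mp hμδ2
    rw [abs_le]; constructor <;> linarith [(abs_le.mp hμδ1).1, (abs_le.mp hμδ2).2]
  set s2 : ℝ := 1 - t ^ 2 with hs2
  have hs2pos : (0:ℝ) < s2 := by rw [hs2]; linarith
  have hs2half : (1:ℝ)/2 ≤ s2 := by rw [hs2]; linarith
  set s : ℝ := Real.sqrt s2 with hs
  have hssq : s ^ 2 = s2 := Real.sq_sqrt (le_of_lt hs2pos)
  have hspos : 0 < s := Real.sqrt_pos.mpr hs2pos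
  set α : ℝ := (⟪w, T w⟫_ℂ).re with hα
  have hαb : |α| ≤ ‖T‖ := by
    have := value_bound T hw
    exact le_trans (Complex.abs_re_le_norm _) this
  -- target value for v
  set β : ℝ := (μ - t ^ 2 * α) / s2 with hβ
  have hβclose : |β - μ| ≤ δ / 2 := by
    have h5 : β - μ = t ^ 2 * (μ - α) / s2 := by
      rw [hβ]; field_simp; ring
    rw [h5, abs_div, abs_of_pos hs2pos]
    rw [div_le_iff₀ hs2pos]
    have h6 : |t ^ 2 * (μ - α)| ≤ t ^ 2 * (2 * ‖T‖) := by
      rw [abs_mul, abs_of_nonneg (sq_nonneg t)]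
      have : |μ - α| ≤ 2 * ‖T‖ := by
        have := abs_sub_abs_le_abs_sub μ α
        have := abs_sub μ α
        calc |μ - α| ≤ |μ| + |α| := abs_sub _ _
          _ ≤ 2 * ‖T‖ := by linarith
      exact mul_le_mul_of_nonneg_left this (sq_nonneg t)
    calc |t ^ 2 * (μ - α)| ≤ t ^ 2 * (2 * ‖T‖) := h6
      _ ≤ δ / 2 * (1 / 2) := by
          have : t ^ 2 * (2 * ‖T‖) ≤ t ^ 2 * (2 * (‖T‖ + 1)) := by
            apply mul_le_mul_of_nonneg_left _ (sq_nonneg t); linarith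
          refine le_trans this ?_
          nlinarith [sq_nonneg t]
      _ ≤ δ / 2 * s2 := by
          apply mul_le_mul_of_nonneg_left hs2half; linarith
  -- construct v₁, v₂
  obtain ⟨v₁, hv₁n, hv₁V, hv₁val⟩ := approx_value hinf T h₁ (V ∪ {w, T w}) (by linarith : (0:ℝ) < δ/4)
  obtain ⟨v₂, hv₂n, hv₂V, hv₂val⟩ := approx_value hinf T h₂ (V ∪ {w, T w, v₁}) (by linarith : (0:ℝ) < δ/4)
  have hv₁w : ⟪w, v₁⟫_ℂ = 0 := hv₁V w (by simp)
  have hv₂w : ⟪w, v₂⟫_ℂ = 0 := hv₂V w (by simp)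
  have hv₁Tw : ⟪T w, v₁⟫_ℂ = 0 := hv₁V (T w) (by simp)
  have hv₂Tw : ⟪T w, v₂⟫_ℂ = 0 := hv₂V (T w) (by simp)
  have hv₁v₂ : ⟪v₁, v₂⟫_ℂ = 0 := hv₂V v₁ (by simp)
  -- real parts close to endpoints
  have hre1 : |(⟪v₁, T v₁⟫_ℂ).re - (μ - δ)| ≤ δ / 4 := by
    have : |(⟪v₁, T v₁⟫_ℂ - ((μ - δ : ℝ) : ℂ)).re| ≤ ‖⟪v₁, T v₁⟫_ℂ - ((μ - δ : ℝ) : ℂ)‖ :=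
      Complex.abs_re_le_norm _
    rw [Complex.sub_re, Complex.ofReal_re] at this
    linarith [le_of_lt hv₁val]
  have hre2 : |(⟪v₂, T v₂⟫_ℂ).re - (μ + δ)| ≤ δ / 4 := by
    have : |(⟪v₂, T v₂⟫_ℂ - ((μ + δ : ℝ) : ℂ)).re| ≤ ‖⟪v₂, T v₂⟫_ℂ - ((μ + δ : ℝ) : ℂ)‖ :=
      Complex.abs_re_le_norm _
    rw [Complex.sub_re, Complex.ofReal_re] at this
    linarith [le_of_lt hv₂val]
  have hβ1 : (⟪v₁, T v₁⟫_ℂ).re ≤ β := by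
    have := abs_le.mp hre1; have := abs_le.mp hβclose
    linarith [(abs_le.mp hre1).1, (abs_le.mp hre1).2, (abs_le.mp hβclose).1, (abs_le.mp hβclose).2]
  have hβ2 : β ≤ (⟪v₂, T v₂⟫_ℂ).re := by
    linarith [(abs_le.mp hre2).1, (abs_le.mp hre2).2, (abs_le.mp hβclose).1, (abs_le.mp hβclose).2]
  obtain ⟨a, b, hab, habval⟩ := ivt_core T hβ1 hβ2
  set v : H := (a : ℂ) • v₁ + (b : ℂ) • v₂ with hv
  have hvn : ‖v‖ = 1 := norm_combo hv₁n hv₂n hv₁v₂ hab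
  have hvw : ⟪w, v⟫_ℂ = 0 := by
    rw [hv, inner_add_right, inner_smul_right, inner_smul_right, hv₁w, hv₂w]
    simp
  have hvTw : ⟪T w, v⟫_ℂ = 0 := by
    rw [hv, inner_add_right, inner_smul_right, inner_smul_right, hv₁Tw, hv₂Tw]
    simp
  have hvV : ∀ y ∈ V, ⟪y, v⟫_ℂ = 0 := by
    intro y hy
    rw [hv, inner_add_right, inner_smul_right, inner_smul_right,
      hv₁V y (by simp [hy]), hv₂V y (by simp [hy])]
    simp
  set u : H := (t : ℂ) • w + (s : ℂ) • v with hu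
  have hun : ‖u‖ = 1 := norm_combo hw hvn hvw (by rw [hssq]; rw [hs2]; ring)
  have hww : ⟪w, w⟫_ℂ = 1 := by rw [inner_self_eq_norm_sq_to_K, hw]; norm_num
  have hvTw' : ⟪v, T w⟫_ℂ = 0 := by rw [← inner_conj_symm, hvTw, map_zero]
  have hwTv : ⟪w, T v⟫_ℂ = 0 := by rw [← symm_inner hsa w v]; exact hvTw
  have hvval : ⟪v, T v⟫_ℂ = ((β : ℝ) : ℂ) := by rw [re_value hsa v, habval]
  have hwval : ⟪w, T w⟫_ℂ = ((α : ℝ) : ℂ) := re_value hsa w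
  have hval : ⟪u, T u⟫_ℂ = ((μ : ℝ) : ℂ) := by
    have hexp : ⟪u, T u⟫_ℂ
        = ((t : ℝ) : ℂ) ^ 2 * ⟪w, T w⟫_ℂ + ((s : ℝ) : ℂ) ^ 2 * ⟪v, T v⟫_ℂ := by
      rw [hu]
      simp only [inner_add_left, inner_add_right, map_add, map_smul, inner_smul_left,
        inner_smul_right, hvTw', hwTv, Complex.conj_ofReal, mul_zero, zero_add, add_zero]
      ring
    rw [hexp, hwval, hvval]
    have hid : (t : ℝ) ^ 2 * α + s2 * β = μ := by
      rw [hβ]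
      field_simp
      ring
    push_cast
    rw [show ((t:ℂ))^2 * ((α:ℝ):ℂ) + ((s:ℝ):ℂ)^2 * ((β:ℝ):ℂ)
      = (((t^2 * α + s^2 * β : ℝ)) : ℂ) by push_cast; ring]
    rw [show (t:ℝ)^2 * α + s^2 * β = μ by rw [hssq]; exact hid]
  refine ⟨u, hun, hval, ?_, ?_⟩
  · intro y hy
    rw [hu, inner_add_right, inner_smul_right, inner_smul_right, hwV y hy, hvV y hy]
    simp
  · rw [hu, inner_add_right, inner_smul_right, inner_smul_right, hww, hvw]
    simp

end Aux3


section Ball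

/-- Points within `infDist x (frontier S)` of an interior point `x` lie in `S`. -/
lemma ball_infDist_frontier_subset {S : Set ℝ} {x : ℝ} (hx : x ∈ interior S) :
    Metric.ball x (Metric.infDist x (frontier S)) ⊆ S := by
  set dd := Metric.infDist x (frontier S) with hdd
  rcases le_or_gt dd 0 with hd0 | hd0
  · rw [Metric.ball_eq_empty.mpr hd0]
    exact Set.empty_subset _
  · have hball_front : Metric.ball x dd ∩ frontier S = ∅ := by
      ext y
      simp only [Set.mem_inter_iff, Metric.mem_ball, Set.mem_empty_iff_false, iff_false, not_and]
      intro hy hyf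
      have := Metric.infDist_le_dist_of_mem (x := x) hyf
      rw [dist_comm] at this
      linarith
    have hsub : Metric.ball x dd ⊆ interior S ∪ (closure S)ᶜ := by
      intro y hy
      by_cases hyc : y ∈ closure S
      · by_cases hyi : y ∈ interior S
        · exact Or.inl hyi
        · exfalso
          have : y ∈ frontier S := by rw [frontier]; exact ⟨hyc, hyi⟩
          have : y ∈ Metric.ball x dd ∩ frontier S := ⟨hy, this⟩
          rw [hball_front] at this
          exact this
      · exact Or.inr hyc
    have hpre : IsPreconnected (Metric.ball x dd) := (convex_ball x dd).isPreconnected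
    have hdisj : Disjoint (interior S) (closure S)ᶜ := by
      rw [Set.disjoint_compl_right_iff_subset]
      exact interior_subset.trans subset_closure
    have hne : (Metric.ball x dd ∩ interior S).Nonempty :=
      ⟨x, Metric.mem_ball_self hd0, hx⟩
    have := IsPreconnected.subset_left_of_subset_union isOpen_interior
      (isClosed_closure.isOpen_compl) hdisj hsub hne hpre
    exact this.trans interior_subset

end Ball

section Schedule

variable (d : ℕ → ℝ) (hd : ∀ n, 0 ≤ d n) (hdiv : ¬ Summable d) (K : ℕ)
include hd hdiv

lemma exists_block (A : ℕ) :
    ∃ B, A + K + 1 ≤ B ∧ ∃ r, r ≤ K ∧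
      1 ≤ ∑ n ∈ (Finset.Ico (A + K) B).filter (fun n => n % (K + 1) = r), d n := by
  classical
  have htend : Filter.Tendsto (fun n => ∑ i ∈ Finset.range n, d i) atTop atTop :=
    (not_summable_iff_tendsto_nat_atTop_of_nonneg hd).mp hdiv
  have hev : ∀ᶠ B in atTop, (∑ i ∈ Finset.range (A + K), d i) + (K + 1 : ℝ)
      ≤ ∑ i ∈ Finset.range B, d i := htend.eventually_ge_atTop _
  obtain ⟨B, hB1, hB2⟩ := (hev.and (eventually_ge_atTop (A + K + 1))).exists
  refine ⟨B, hB2, ?_⟩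
  have hAB : A + K ≤ B := le_trans (Nat.le_succ _) hB2
  have hIco : (K + 1 : ℝ) ≤ ∑ n ∈ Finset.Ico (A + K) B, d n := by
    have := Finset.sum_Ico_eq_sub d hAB
    rw [this]
    linarith
  -- pigeonhole over residues mod (K+1)
  by_contra hcon
  push_neg at hcon
  have hfib : ∑ r ∈ Finset.range (K + 1),
      ∑ n ∈ (Finset.Ico (A + K) B).filter (fun n => n % (K + 1) = r), d n
      = ∑ n ∈ Finset.Ico (A + K) B, d n := by
    apply Finset.sum_fiberwise_of_maps_to
    intro n _
    exact Finset.mem_range.mpr (Nat.mod_lt _ (Nat.succ_pos K))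
  have hlt : ∑ r ∈ Finset.range (K + 1),
      ∑ n ∈ (Finset.Ico (A + K) B).filter (fun n => n % (K + 1) = r), d n
      < ∑ r ∈ Finset.range (K + 1), (1 : ℝ) := by
    apply Finset.sum_lt_sum_of_nonempty ⟨0, Finset.mem_range.mpr (Nat.succ_pos K)⟩
    intro r hr
    exact hcon r (Nat.lt_succ_iff.mp (Finset.mem_range.mp hr))
  rw [hfib] at hlt
  simp only [Finset.sum_const, Finset.card_range, nsmul_eq_mul, mul_one] at hlt
  push_cast at hlt
  linarith

/-- The block boundaries of the construction. -/
noncomputable def blockN : ℕ → ℕ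
  | 0 => 0
  | m + 1 => (exists_block d hd hdiv K (blockN m)).choose

/-- The capture residue class used in block `m`. -/
noncomputable def rPhase (m : ℕ) : ℕ :=
  (exists_block d hd hdiv K (blockN d hd hdiv K m)).choose_spec.2.choose

lemma blockN_succ_prop (m : ℕ) :
    blockN d hd hdiv K m + K + 1 ≤ blockN d hd hdiv K (m + 1) ∧
    rPhase d hd hdiv K m ≤ K ∧
      1 ≤ ∑ n ∈ (Finset.Ico (blockN d hd hdiv K m + K) (blockN d hd hdiv K (m + 1))).filter
          (fun n => n % (K + 1) = rPhase d hd hdiv K m), d n := by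
  have h1 := (exists_block d hd hdiv K (blockN d hd hdiv K m)).choose_spec
  have h2 := (exists_block d hd hdiv K (blockN d hd hdiv K m)).choose_spec.2.choose_spec
  exact ⟨by rw [blockN]; exact h1.1, h2.1, by rw [blockN]; exact h2.2⟩

lemma blockN_strictMono : StrictMono (blockN d hd hdiv K) := by
  apply strictMono_nat_of_lt_succ
  intro m
  have := (blockN_succ_prop d hd hdiv K m).1
  omega

lemma blockN_le_self (m : ℕ) : m ≤ blockN d hd hdiv K m := by
  induction m with
  | zero => exact Nat.zero_le _
  | succ m ih =>
    have := (blockN_succ_prop d hd hdiv K m).1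
    omega

/-- The block (phase) containing index `n`. -/
noncomputable def phaseOf (n : ℕ) : ℕ :=
  Nat.findGreatest (fun m => blockN d hd hdiv K m ≤ n) n

lemma phaseOf_spec (n : ℕ) :
    blockN d hd hdiv K (phaseOf d hd hdiv K n) ≤ n ∧
      n < blockN d hd hdiv K (phaseOf d hd hdiv K n + 1) := by
  constructor
  · have h0 : blockN d hd hdiv K 0 ≤ n := by rw [blockN]; exact Nat.zero_le n
    exact Nat.findGreatest_spec (P := fun m => blockN d hd hdiv K m ≤ n) (Nat.zero_le n) h0
  · by_contra hcon
    push_neg at hcon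
    have hle : phaseOf d hd hdiv K n + 1 ≤ n := by
      calc phaseOf d hd hdiv K n + 1 ≤ blockN d hd hdiv K (phaseOf d hd hdiv K n + 1) :=
            blockN_le_self d hd hdiv K _
        _ ≤ n := hcon
    have := Nat.le_findGreatest (P := fun m => blockN d hd hdiv K m ≤ n) hle hcon
    simp only [phaseOf] at this ⊢
    omega

lemma phaseOf_eq (n m : ℕ) (h1 : blockN d hd hdiv K m ≤ n)
    (h2 : n < blockN d hd hdiv K (m + 1)) : phaseOf d hd hdiv K n = m := by
  have hspec := phaseOf_spec d hd hdiv K n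
  by_contra hne
  rcases Nat.lt_or_ge (phaseOf d hd hdiv K n) m with hlt | hge
  · have : blockN d hd hdiv K (phaseOf d hd hdiv K n + 1) ≤ blockN d hd hdiv K m :=
      (blockN_strictMono d hd hdiv K).monotone (by omega)
    omega
  · have hgt : m < phaseOf d hd hdiv K n := lt_of_le_of_ne hge (fun h => hne h.symm)
    have : blockN d hd hdiv K (m + 1) ≤ blockN d hd hdiv K (phaseOf d hd hdiv K n) :=
      (blockN_strictMono d hd hdiv K).monotone (by omega)
    omega

/-- Whether step `n` is a capture step. -/
def IsCapture (n : ℕ) : Prop :=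
  n % (K + 1) = rPhase d hd hdiv K (phaseOf d hd hdiv K n) ∧
    blockN d hd hdiv K (phaseOf d hd hdiv K n) + K ≤ n

/-- The index of the dense-sequence vector targeted at step `n`. -/
noncomputable def keyAt (n : ℕ) : ℕ := (Nat.unpair (phaseOf d hd hdiv K n)).1

/-- Scheduling: the K steps preceding a capture step are burn steps of the same phase. -/
lemma sched_burn {n : ℕ} (hc : IsCapture d hd hdiv K n) {j : ℕ} (hj1 : n - K ≤ j) (hj2 : j < n) :
    phaseOf d hd hdiv K j = phaseOf d hd hdiv K n ∧ ¬ IsCapture d hd hdiv K j ∧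
      keyAt d hd hdiv K j = keyAt d hd hdiv K n := by
  obtain ⟨hmod, hge⟩ := hc
  have hspec := phaseOf_spec d hd hdiv K n
  have hphase : phaseOf d hd hdiv K j = phaseOf d hd hdiv K n := by
    apply phaseOf_eq
    · omega
    · omega
  refine ⟨hphase, ?_, by rw [keyAt, keyAt, hphase]⟩
  intro hcj
  obtain ⟨hmodj, hgej⟩ := hcj
  rw [hphase] at hmodj
  -- j ≡ n mod (K+1), j < n, n - j ≤ K : contradiction
  have hmodeq : j % (K + 1) = n % (K + 1) := by rw [hmodj, hmod]
  have hdvd : (K + 1) ∣ n - j := (Nat.modEq_iff_dvd' (le_of_lt hj2)).mp hmodeq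
  have hpos : 0 < n - j := by omega
  have := Nat.le_of_dvd hpos hdvd
  omega

end Schedule


section Construction
variable {H : Type*} [NormedAddCommGroup H] [InnerProductSpace ℂ H] [CompleteSpace H]
variable (T : H →L[ℂ] H) (lam : ℕ → ℝ) (f : ℕ → H)
variable (d : ℕ → ℝ) (hd : ∀ n, 0 ≤ d n) (hdiv : ¬ Summable d) (K : ℕ)

/-- The capture coefficient. -/
noncomputable def capc : ℝ := (16 * (‖T‖ + 1))⁻¹

lemma capc_pos : 0 < capc T := by rw [capc]; positivity

/-- The capture amplitude at step `n`. -/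
noncomputable def tcap (n : ℕ) : ℝ := Real.sqrt (min (capc T * d n) (1 / 2))

lemma tcap_nonneg (n : ℕ) : 0 ≤ tcap T d n := Real.sqrt_nonneg _

lemma tcap_sq (hd : ∀ n, 0 ≤ d n) (n : ℕ) : tcap T d n ^ 2 = min (capc T * d n) (1 / 2) := by
  rw [tcap, Real.sq_sqrt]
  exact le_min (mul_nonneg (le_of_lt (capc_pos T)) (hd n)) (by norm_num)

/-- The residual of `f k` after the first `n` construction vectors. -/
noncomputable def resid (p : ℕ → H) (k n : ℕ) : H :=
  f k - ∑ j ∈ Finset.range n, ⟪p j, f k⟫_ℂ • p j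

/-- The conditions the `n`-th constructed vector must satisfy, given the previous ones. -/
def ExtP (p : ℕ → H) (n : ℕ) (x : H) : Prop :=
  ‖x‖ = 1 ∧
  (∀ j < n, ⟪p j, x⟫_ℂ = 0) ∧
  (∀ j < n, n ≤ j + K → ⟪T (p j), x⟫_ℂ = 0) ∧
  ⟪x, T x⟫_ℂ = ((lam n : ℝ) : ℂ) ∧
  (¬ IsCapture d hd hdiv K n →
    ⟪resid f p (keyAt d hd hdiv K n) n, x⟫_ℂ = 0 ∧
    ⟪T (resid f p (keyAt d hd hdiv K n) n), x⟫_ℂ = 0) ∧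
  (IsCapture d hd hdiv K n →
    ⟪resid f p (keyAt d hd hdiv K n) n, x⟫_ℂ
      = ((tcap T d n * ‖resid f p (keyAt d hd hdiv K n) n‖ : ℝ) : ℂ))

lemma resid_congr {p q : ℕ → H} {n : ℕ} (k : ℕ) (h : ∀ j < n, p j = q j) :
    resid f p k n = resid f q k n := by
  unfold resid
  congr 1
  apply Finset.sum_congr rfl
  intro j hj
  rw [h j (Finset.mem_range.mp hj)]

lemma ext_of_congr {p q : ℕ → H} {n : ℕ} {x : H} (h : ∀ j < n, p j = q j)
    (he : ExtP T lam f d hd hdiv K p n x) : ExtP T lam f d hd hdiv K q n x := by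
  obtain ⟨e1, e2, e3, e4, e5, e6⟩ := he
  have hres : ∀ k, resid f p k n = resid f q k n := fun k => resid_congr f k h
  refine ⟨e1, ?_, ?_, e4, ?_, ?_⟩
  · intro j hj; rw [← h j hj]; exact e2 j hj
  · intro j hj hjK; rw [← h j hj]; exact e3 j hj hjK
  · intro hb; rw [← hres]; exact e5 hb
  · intro hc; rw [← hres]; exact e6 hc

/-- The recursively constructed sequence. -/
noncomputable def useq (n : ℕ) : H :=
  letI : Nonempty H := ⟨0⟩
  Classical.epsilon (fun x => ExtP T lam f d hd hdiv K
    (fun j => if h : j < n then useq j else 0) n x)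
termination_by n
decreasing_by exact h

lemma useq_spec (n : ℕ)
    (hex : ∃ x, ExtP T lam f d hd hdiv K (useq T lam f d hd hdiv K) n x) :
    ExtP T lam f d hd hdiv K (useq T lam f d hd hdiv K) n (useq T lam f d hd hdiv K n) := by
  letI : Nonempty H := ⟨0⟩
  have hcong : ∀ j < n, useq T lam f d hd hdiv K j
      = (fun j => if h : j < n then useq T lam f d hd hdiv K j else 0) j := by
    intro j hj
    simp [hj]
  have hex' : ∃ x, ExtP T lam f d hd hdiv K
      (fun j => if h : j < n then useq T lam f d hd hdiv K j else 0) n x :=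
    hex.imp (fun x hx => ext_of_congr T lam f d hd hdiv K hcong hx)
  have hspec := Classical.epsilon_spec hex'
  have heq : useq T lam f d hd hdiv K n = Classical.epsilon (fun x => ExtP T lam f d hd hdiv K
      (fun j => if h : j < n then useq T lam f d hd hdiv K j else 0) n x) := by
    rw [useq]
  rw [heq]
  exact ext_of_congr T lam f d hd hdiv K (fun j hj => (hcong j hj).symm) hspec


lemma exist_step (hinf : ¬ FiniteDimensional ℂ H) (hsa : IsSelfAdjoint T)
    (hmem1 : ∀ n, ((lam n - d n / 2 : ℝ) : ℂ) ∈ essNumRange T)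
    (hmem2 : ∀ n, ((lam n + d n / 2 : ℝ) : ℂ) ∈ essNumRange T)
    (hdpos : ∀ n, 0 < d n)
    (p : ℕ → H) (n : ℕ)
    (IH : ∀ m, m < n → ExtP T lam f d hd hdiv K p m (p m)) :
    ∃ x, ExtP T lam f d hd hdiv K p n x := by
  classical
  have hδpos : 0 < d n / 2 := by linarith [hdpos n]
  -- basic facts about previous vectors
  have hnorm : ∀ j, j < n → ‖p j‖ = 1 := fun j hj => (IH j hj).1
  have horth : ∀ i j, i < n → j < n → i ≠ j → ⟪p i, p j⟫_ℂ = 0 := by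
    intro i j hi hj hij
    rcases lt_or_gt_of_ne hij with h | h
    · exact (IH j hj).2.1 i h
    · rw [← inner_conj_symm, (IH i hi).2.1 j h, map_zero]
  have hgperp : ∀ k' j, j < n → ⟪p j, resid f p k' n⟫_ℂ = 0 := by
    intro k' j hj
    have hjj : ⟪p j, p j⟫_ℂ = 1 := by
      rw [inner_self_eq_norm_sq_to_K, hnorm j hj]; norm_num
    have hsum : ∑ i ∈ Finset.range n, ⟪p i, f k'⟫_ℂ * ⟪p j, p i⟫_ℂ = ⟪p j, f k'⟫_ℂ := by
      rw [Finset.sum_eq_single j]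
      · rw [hjj, mul_one]
      · intro i hi hij
        rw [horth j i hj (Finset.mem_range.mp hi) (Ne.symm hij), mul_zero]
      · intro hj'
        exact absurd (Finset.mem_range.mpr hj) hj'
    rw [resid, inner_sub_right, inner_sum]
    simp only [inner_smul_right]
    rw [hsum, sub_self]
  -- ⟪resid, x⟫ = ⟪f k, x⟫ whenever x ⊥ p j for j < i
  have hresid_eq : ∀ k' i, i ≤ n → ∀ x : H, (∀ j, j < i → ⟪p j, x⟫_ℂ = 0) →
      ⟪resid f p k' i, x⟫_ℂ = ⟪f k', x⟫_ℂ := by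
    intro k' i hi x hx
    rw [resid, inner_sub_left, sum_inner]
    have : ∑ j ∈ Finset.range i, ⟪⟪p j, f k'⟫_ℂ • p j, x⟫_ℂ = 0 := by
      apply Finset.sum_eq_zero
      intro j hj
      rw [inner_smul_left, hx j (Finset.mem_range.mp hj), mul_zero]
    rw [this, sub_zero]
  -- stability of the residual across burn steps
  have hstab : ∀ k' m2, m2 ≤ n → ∀ m1, m1 ≤ m2 →
      (∀ i, m1 ≤ i → i < m2 → ¬ IsCapture d hd hdiv K i ∧ keyAt d hd hdiv K i = k') →
      resid f p k' m2 = resid f p k' m1 := by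
    intro k' m2 hm2n
    induction m2 with
    | zero => intro m1 hm1 _; interval_cases m1; rfl
    | succ m ih =>
      intro m1 hm1 hburn
      rcases Nat.eq_or_lt_of_le hm1 with he | hlt
      · rw [he]
      · have hm1m : m1 ≤ m := by omega
        have hmn : m ≤ n := by omega
        have hstep : resid f p k' (m + 1) = resid f p k' m := by
          have hbm := hburn m hm1m (Nat.lt_succ_self m)
          have hmlt : m < n := by
            rcases Nat.eq_or_lt_of_le hm2n with he2 | hl2
            · omega
            · omega
          have hburn_clause := ((IH m hmlt).2.2.2.2.1 hbm.1)
          rw [hbm.2] at hburn_clause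
          have hfk : ⟪f k', p m⟫_ℂ = 0 := by
            rw [← hresid_eq k' m (le_of_lt hmlt) (p m)
              (fun j hj => horth j m (by omega) hmlt (by omega))]
            exact hburn_clause.1
          have hpf : ⟪p m, f k'⟫_ℂ = 0 := by
            rw [← inner_conj_symm, hfk, map_zero]
          rw [resid, resid, Finset.sum_range_succ, hpf, zero_smul, add_zero]
        rw [hstep]
        exact ih hmn m1 hm1m (fun i h1 h2 => hburn i h1 (by omega))
  -- the orthogonality constraint set
  set V : Finset H := ((Finset.range n).image p) ∪
    ((Finset.Ico (n - K) n).image (fun j => T (p j))) with hV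
  set k := keyAt d hd hdiv K n with hk
  set g : H := resid f p k n with hg
  have hcapmain : ∀ u : H, ‖u‖ = 1 → ⟪u, T u⟫_ℂ = ((lam n : ℝ) : ℂ) →
      (∀ y ∈ V, ⟪y, u⟫_ℂ = 0) →
      (‖u‖ = 1 ∧ (∀ j < n, ⟪p j, u⟫_ℂ = 0) ∧
        (∀ j < n, n ≤ j + K → ⟪T (p j), u⟫_ℂ = 0) ∧ ⟪u, T u⟫_ℂ = ((lam n : ℝ) : ℂ)) := by
    intro u h1 h2 h3
    refine ⟨h1, ?_, ?_, h2⟩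
    · intro j hj
      exact h3 (p j) (Finset.mem_union_left _ (Finset.mem_image_of_mem p
        (Finset.mem_range.mpr hj)))
    · intro j hj hjK
      refine h3 (T (p j)) (Finset.mem_union_right _ ?_)
      apply Finset.mem_image_of_mem
      rw [Finset.mem_Ico]
      omega
  by_cases hcap : IsCapture d hd hdiv K n
  · -- capture step
    have hgTp : ∀ j, j < n → n ≤ j + K → ⟪T (p j), g⟫_ℂ = 0 := by
      intro j hj hjK
      have hb := sched_burn d hd hdiv K hcap (j := j) (by omega) hj
      have hgj : g = resid f p k j := by
        rw [hg]
        apply hstab k n (le_refl n) j (le_of_lt hj)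
        intro i h1 h2
        have hbi := sched_burn d hd hdiv K hcap (j := i) (by omega) h2
        exact ⟨hbi.2.1, hbi.2.2⟩
      have hbc := ((IH j hj).2.2.2.2.1 hb.2.1)
      rw [hb.2.2] at hbc
      rw [hgj]
      have h4 : ⟪T (resid f p k j), p j⟫_ℂ = 0 := hbc.2
      rw [show ⟪T (p j), resid f p k j⟫_ℂ = ⟪p j, T (resid f p k j)⟫_ℂ from
        symm_inner hsa (p j) (resid f p k j)]
      rw [← inner_conj_symm, h4, map_zero]
    by_cases hg0 : g = 0
    · -- residual already zero: any vector orthogonal to V will do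
      obtain ⟨w, hw, hwV⟩ := exists_unit_perp hinf V
      obtain ⟨u, hun, huval, huV, huw⟩ := cap_lemma hinf hsa hδpos (hmem1 n) (hmem2 n)
        V hw hwV (le_refl (0:ℝ)) (by norm_num) (by norm_num; linarith [hdpos n])
      obtain ⟨e1, e2, e3, e4⟩ := hcapmain u hun huval huV
      refine ⟨u, e1, e2, e3, e4, fun hnc => absurd hcap hnc, fun _ => ?_⟩
      rw [← hk, ← hg, hg0]
      simp
    · -- genuine capture
      set w : H := ((‖g‖ : ℝ) : ℂ)⁻¹ • g with hw
      have hgn0 : (‖g‖ : ℝ) ≠ 0 := norm_ne_zero_iff.mpr hg0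
      have hwnorm : ‖w‖ = 1 := by
        rw [hw, norm_smul]
        simp [hgn0]
      have hwV : ∀ y ∈ V, ⟪y, w⟫_ℂ = 0 := by
        intro y hy
        rw [hw, inner_smul_right]
        rcases Finset.mem_union.mp hy with hy1 | hy2
        · obtain ⟨j, hj, rfl⟩ := Finset.mem_image.mp hy1
          rw [hgperp k j (Finset.mem_range.mp hj), mul_zero]
        · obtain ⟨j, hj, rfl⟩ := Finset.mem_image.mp hy2
          rw [Finset.mem_Ico] at hj
          rw [hgTp j hj.2 (by omega), mul_zero]
      have ht2 : tcap T d n ^ 2 ≤ 1 / 2 := by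
        rw [tcap_sq T d hd n]; exact min_le_right _ _
      have htδ : 8 * tcap T d n ^ 2 * (‖T‖ + 1) ≤ d n / 2 := by
        rw [tcap_sq T d hd n]
        have h5 : min (capc T * d n) (1 / 2) ≤ capc T * d n := min_le_left _ _
        have h6 : 8 * (capc T * d n) * (‖T‖ + 1) = d n / 2 := by
          rw [capc]
          field_simp
          ring
        nlinarith [norm_nonneg T]
      obtain ⟨u, hun, huval, huV, huw⟩ := cap_lemma hinf hsa hδpos (hmem1 n) (hmem2 n)
        V hwnorm hwV (tcap_nonneg T d n) ht2 htδ
      obtain ⟨e1, e2, e3, e4⟩ := hcapmain u hun huval huV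
      refine ⟨u, e1, e2, e3, e4, fun hnc => absurd hcap hnc, fun _ => ?_⟩
      rw [← hk, ← hg]
      have hgw : g = ((‖g‖ : ℝ) : ℂ) • w := by
        rw [hw, smul_smul, mul_inv_cancel₀ (by exact_mod_cast hgn0), one_smul]
      rw [hgw, inner_smul_left, Complex.conj_ofReal, huw]
      rw [norm_smul, hwnorm, mul_one, Complex.norm_real, Real.norm_eq_abs,
        abs_of_nonneg (norm_nonneg g)]
      push_cast
      ring
  · -- burn step
    set V' : Finset H := V ∪ {g, T g} with hV'
    obtain ⟨w, hw, hwV'⟩ := exists_unit_perp hinf V'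
    obtain ⟨u, hun, huval, huV', huw⟩ := cap_lemma hinf hsa hδpos (hmem1 n) (hmem2 n)
      V' hw hwV' (le_refl (0:ℝ)) (by norm_num) (by norm_num; linarith [hdpos n])
    have huV : ∀ y ∈ V, ⟪y, u⟫_ℂ = 0 := fun y hy =>
      huV' y (Finset.mem_union_left _ hy)
    obtain ⟨e1, e2, e3, e4⟩ := hcapmain u hun huval huV
    refine ⟨u, e1, e2, e3, e4, fun _ => ?_, fun hc => absurd hc hcap⟩
    constructor
    · rw [← hk, ← hg]
      exact huV' g (Finset.mem_union_right _ (by simp))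
    · rw [← hk, ← hg]
      exact huV' (T g) (Finset.mem_union_right _ (by simp))

lemma useq_ext (hinf : ¬ FiniteDimensional ℂ H) (hsa : IsSelfAdjoint T)
    (hmem1 : ∀ n, ((lam n - d n / 2 : ℝ) : ℂ) ∈ essNumRange T)
    (hmem2 : ∀ n, ((lam n + d n / 2 : ℝ) : ℂ) ∈ essNumRange T)
    (hdpos : ∀ n, 0 < d n) :
    ∀ n, ExtP T lam f d hd hdiv K (useq T lam f d hd hdiv K) n
      (useq T lam f d hd hdiv K n) := by
  intro n
  induction n using Nat.strong_induction_on with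
  | _ n IH =>
    apply useq_spec
    exact exist_step T lam f d hd hdiv K hinf hsa hmem1 hmem2 hdpos
      (useq T lam f d hd hdiv K) n IH


noncomputable instance decCapture (n : ℕ) : Decidable (IsCapture d hd hdiv K n) :=
  inferInstanceAs (Decidable (_ ∧ _))

lemma resid_succ (p : ℕ → H) (k n : ℕ) :
    resid f p k (n + 1) = resid f p k n - ⟪p n, f k⟫_ℂ • p n := by
  rw [resid, resid, Finset.sum_range_succ]
  abel

lemma resid_decay (hinf : ¬ FiniteDimensional ℂ H) (hsa : IsSelfAdjoint T)
    (hmem1 : ∀ n, ((lam n - d n / 2 : ℝ) : ℂ) ∈ essNumRange T)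
    (hmem2 : ∀ n, ((lam n + d n / 2 : ℝ) : ℂ) ∈ essNumRange T)
    (hdpos : ∀ n, 0 < d n) (k : ℕ) (N : ℕ) :
    ‖resid f (useq T lam f d hd hdiv K) k N‖ ^ 2 ≤
      ‖f k‖ ^ 2 * Real.exp (-(∑ n ∈ (Finset.range N).filter
        (fun n => IsCapture d hd hdiv K n ∧ keyAt d hd hdiv K n = k), tcap T d n ^ 2)) := by
  have hext := useq_ext T lam f d hd hdiv K hinf hsa hmem1 hmem2 hdpos
  set p := useq T lam f d hd hdiv K with hp
  induction N with
  | zero =>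
    simp only [Finset.range_zero, Finset.filter_empty, Finset.sum_empty, neg_zero,
      Real.exp_zero, mul_one]
    rw [resid]
    simp
  | succ N ih =>
    have hnormp : ‖p N‖ = 1 := (hext N).1
    have hperp : ∀ j, j < N → ⟪p j, p N⟫_ℂ = 0 := (hext N).2.1
    set c : ℂ := ⟪p N, f k⟫_ℂ with hcdef
    have hc : ⟪resid f p k N, p N⟫_ℂ = (starRingEnd ℂ) c := by
      rw [resid, inner_sub_left, sum_inner]
      have hz : ∑ j ∈ Finset.range N, ⟪⟪p j, f k⟫_ℂ • p j, p N⟫_ℂ = 0 := by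
        apply Finset.sum_eq_zero
        intro j hj
        rw [inner_smul_left, hperp j (Finset.mem_range.mp hj), mul_zero]
      rw [hz, sub_zero, hcdef, ← inner_conj_symm]
    have hsq : ‖resid f p k (N + 1)‖ ^ 2 = ‖resid f p k N‖ ^ 2 - ‖c‖ ^ 2 := by
      rw [resid_succ]
      rw [@norm_sub_sq ℂ _ _ _ _ (resid f p k N) (c • p N)]
      have h1 : ⟪resid f p k N, c • p N⟫_ℂ = c * (starRingEnd ℂ) c := by
        rw [inner_smul_right, hc]
      have h2 : RCLike.re (c * (starRingEnd ℂ) c) = ‖c‖ ^ 2 := by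
        simp only [RCLike.re_to_complex, Complex.mul_conj, Complex.ofReal_re]
        rw [Complex.normSq_eq_norm_sq]
      have h3 : ‖c • p N‖ ^ 2 = ‖c‖ ^ 2 := by
        rw [norm_smul, hnormp, mul_one]
      rw [h1, h2, h3]
      ring
    by_cases hPK : IsCapture d hd hdiv K N ∧ keyAt d hd hdiv K N = k
    · -- capture step for key k
      have hclause := (hext N).2.2.2.2.2 hPK.1
      rw [hPK.2] at hclause
      have hcval : (starRingEnd ℂ) c = ((tcap T d N * ‖resid f p k N‖ : ℝ) : ℂ) := by
        rw [← hc]; exact hclause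
      have hcnorm : ‖c‖ ^ 2 = tcap T d N ^ 2 * ‖resid f p k N‖ ^ 2 := by
        have : ‖c‖ = tcap T d N * ‖resid f p k N‖ := by
          have h4 : ‖(starRingEnd ℂ) c‖ = ‖c‖ := by simp
          rw [← h4, hcval, Complex.norm_real, Real.norm_eq_abs,
            abs_of_nonneg (mul_nonneg (tcap_nonneg T d N) (norm_nonneg _))]
        rw [this]; ring
      have hfilter : (Finset.range (N + 1)).filter
          (fun n => IsCapture d hd hdiv K n ∧ keyAt d hd hdiv K n = k)
          = insert N ((Finset.range N).filter
            (fun n => IsCapture d hd hdiv K n ∧ keyAt d hd hdiv K n = k)) := by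
        rw [Finset.range_add_one, Finset.filter_insert, if_pos hPK]
      have hNnotmem : N ∉ (Finset.range N).filter
          (fun n => IsCapture d hd hdiv K n ∧ keyAt d hd hdiv K n = k) := by
        simp
      have ht2 : tcap T d N ^ 2 ≤ 1 / 2 := by
        rw [tcap_sq T d hd N]; exact min_le_right _ _
      have hone : 0 ≤ 1 - tcap T d N ^ 2 := by linarith
      have hexp : 1 - tcap T d N ^ 2 ≤ Real.exp (-(tcap T d N ^ 2)) := by
        have := Real.add_one_le_exp (-(tcap T d N ^ 2))
        linarith
      rw [hsq, hcnorm, hfilter, Finset.sum_insert hNnotmem]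
      have hstep : ‖resid f p k N‖ ^ 2 - tcap T d N ^ 2 * ‖resid f p k N‖ ^ 2
          = (1 - tcap T d N ^ 2) * ‖resid f p k N‖ ^ 2 := by ring
      rw [hstep]
      calc (1 - tcap T d N ^ 2) * ‖resid f p k N‖ ^ 2
          ≤ Real.exp (-(tcap T d N ^ 2)) * (‖f k‖ ^ 2 * Real.exp (-(∑ n ∈ (Finset.range N).filter
            (fun n => IsCapture d hd hdiv K n ∧ keyAt d hd hdiv K n = k), tcap T d n ^ 2))) := by
            apply mul_le_mul hexp ih (sq_nonneg _) (Real.exp_nonneg _)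
        _ = ‖f k‖ ^ 2 * Real.exp (-(tcap T d N ^ 2 + ∑ n ∈ (Finset.range N).filter
            (fun n => IsCapture d hd hdiv K n ∧ keyAt d hd hdiv K n = k), tcap T d n ^ 2)) := by
            rw [neg_add, Real.exp_add]
            ring
    · -- other step: residual does not increase
      have hfilter : (Finset.range (N + 1)).filter
          (fun n => IsCapture d hd hdiv K n ∧ keyAt d hd hdiv K n = k)
          = (Finset.range N).filter
            (fun n => IsCapture d hd hdiv K n ∧ keyAt d hd hdiv K n = k) := by
        rw [Finset.range_add_one, Finset.filter_insert, if_neg hPK]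
      rw [hfilter, hsq]
      have := sq_nonneg ‖c‖
      linarith

lemma phasesum (hd : ∀ n, 0 ≤ d n) {F : Finset ℕ} (h : 1 ≤ ∑ n ∈ F, d n) :
    min (capc T) (1 / 2) ≤ ∑ n ∈ F, min (capc T * d n) (1 / 2) := by
  have hnn : ∀ i ∈ F, (0:ℝ) ≤ min (capc T * d i) (1 / 2) := fun i _ =>
    le_min (mul_nonneg (capc_pos T).le (hd i)) (by norm_num)
  by_cases hex : ∃ n ∈ F, (1:ℝ) / 2 ≤ capc T * d n
  · obtain ⟨n0, hn0, hge⟩ := hex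
    calc min (capc T) (1 / 2) ≤ 1 / 2 := min_le_right _ _
      _ = min (capc T * d n0) (1 / 2) := (min_eq_right hge).symm
      _ ≤ ∑ n ∈ F, min (capc T * d n) (1 / 2) := Finset.single_le_sum hnn hn0
  · push_neg at hex
    have heq : ∀ n ∈ F, min (capc T * d n) (1 / 2) = capc T * d n := fun n hn =>
      min_eq_left (le_of_lt (hex n hn))
    rw [Finset.sum_congr rfl heq, ← Finset.mul_sum]
    calc min (capc T) (1 / 2) ≤ capc T := min_le_left _ _
      _ = capc T * 1 := (mul_one _).symm
      _ ≤ capc T * ∑ n ∈ F, d n := by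
          apply mul_le_mul_of_nonneg_left h (capc_pos T).le

lemma capture_sum_unbounded (k : ℕ) (C : ℝ) :
    ∃ N, C ≤ ∑ n ∈ (Finset.range N).filter
      (fun n => IsCapture d hd hdiv K n ∧ keyAt d hd hdiv K n = k), tcap T d n ^ 2 := by
  classical
  set ε : ℝ := min (capc T) (1 / 2) with hε
  have hεpos : 0 < ε := lt_min (capc_pos T) (by norm_num)
  rcases le_or_gt C 0 with hC | hC
  · refine ⟨0, ?_⟩
    simp only [Finset.range_zero, Finset.filter_empty, Finset.sum_empty]
    linarith
  set I : ℕ := ⌈C / ε⌉₊ with hI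
  set Fm : ℕ → Finset ℕ := fun m =>
    (Finset.Ico (blockN d hd hdiv K m + K) (blockN d hd hdiv K (m + 1))).filter
      (fun n => n % (K + 1) = rPhase d hd hdiv K m) with hFm
  -- each element of `Fm m` is a capture step of phase m
  have hFmprop : ∀ m, ∀ n ∈ Fm m, IsCapture d hd hdiv K n ∧ phaseOf d hd hdiv K n = m := by
    intro m n hn
    rw [hFm] at hn
    obtain ⟨hn1, hn2⟩ := Finset.mem_filter.mp hn
    rw [Finset.mem_Ico] at hn1
    have hphase : phaseOf d hd hdiv K n = m := by
      apply phaseOf_eq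
      · omega
      · exact hn1.2
    exact ⟨⟨by rw [hphase]; exact hn2, by rw [hphase]; omega⟩, hphase⟩
  have hFmsum : ∀ m, ε ≤ ∑ n ∈ Fm m, tcap T d n ^ 2 := by
    intro m
    have h1 := (blockN_succ_prop d hd hdiv K m).2.2
    have h2 : ∀ n ∈ Fm m, tcap T d n ^ 2 = min (capc T * d n) (1 / 2) := fun n _ =>
      tcap_sq T d hd n
    rw [Finset.sum_congr rfl h2]
    exact phasesum T d hd h1
  set U : Finset ℕ := (Finset.range (I + 1)).biUnion (fun i => Fm (Nat.pair k i)) with hU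
  have hdisj : (↑(Finset.range (I + 1)) : Set ℕ).PairwiseDisjoint
      (fun i => Fm (Nat.pair k i)) := by
    intro i _ j _ hij
    have hpairne : Nat.pair k i ≠ Nat.pair k j := by
      intro hcon
      apply hij
      have := congrArg Nat.unpair hcon
      rw [Nat.unpair_pair, Nat.unpair_pair] at this
      exact (Prod.mk.injEq _ _ _ _).mp this |>.2
    apply Finset.disjoint_left.mpr
    intro n hni hnj
    have h1 := (hFmprop (Nat.pair k i) n hni).2
    have h2 := (hFmprop (Nat.pair k j) n hnj).2
    rw [h1] at h2
    exact hpairne h2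
  refine ⟨blockN d hd hdiv K (Nat.pair k I + 1), ?_⟩
  have hUsub : U ⊆ (Finset.range (blockN d hd hdiv K (Nat.pair k I + 1))).filter
      (fun n => IsCapture d hd hdiv K n ∧ keyAt d hd hdiv K n = k) := by
    intro n hn
    obtain ⟨i, hi, hni⟩ := Finset.mem_biUnion.mp hn
    obtain ⟨hcapn, hphn⟩ := hFmprop (Nat.pair k i) n hni
    rw [Finset.mem_filter, Finset.mem_range]
    refine ⟨?_, hcapn, ?_⟩
    · rw [hFm] at hni
      obtain ⟨hn1, _⟩ := Finset.mem_filter.mp hni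
      rw [Finset.mem_Ico] at hn1
      have hle : Nat.pair k i + 1 ≤ Nat.pair k I + 1 := by
        have hiI : i ≤ I := Nat.lt_succ_iff.mp (Finset.mem_range.mp hi)
        rcases Nat.eq_or_lt_of_le hiI with he | hl
        · rw [he]
        · have := Nat.pair_lt_pair_right k hl
          omega
      calc n < blockN d hd hdiv K (Nat.pair k i + 1) := hn1.2
        _ ≤ blockN d hd hdiv K (Nat.pair k I + 1) :=
          (blockN_strictMono d hd hdiv K).monotone hle
    · rw [keyAt, hphn, Nat.unpair_pair]
  have hsumU : (I + 1 : ℝ) * ε ≤ ∑ n ∈ U, tcap T d n ^ 2 := by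
    rw [hU, Finset.sum_biUnion hdisj]
    calc (I + 1 : ℝ) * ε = ∑ _i ∈ Finset.range (I + 1), ε := by
          rw [Finset.sum_const, Finset.card_range, nsmul_eq_mul]
          push_cast
          ring
      _ ≤ ∑ i ∈ Finset.range (I + 1), ∑ n ∈ Fm (Nat.pair k i), tcap T d n ^ 2 :=
          Finset.sum_le_sum (fun i _ => hFmsum (Nat.pair k i))
  have hCle : C ≤ (I + 1 : ℝ) * ε := by
    have h5 : C / ε ≤ (I : ℝ) := Nat.le_ceil _
    have h6 : C ≤ (I : ℝ) * ε := by
      rw [div_le_iff₀ hεpos] at h5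
      linarith
    nlinarith
  calc C ≤ (I + 1 : ℝ) * ε := hCle
    _ ≤ ∑ n ∈ U, tcap T d n ^ 2 := hsumU
    _ ≤ ∑ n ∈ (Finset.range (blockN d hd hdiv K (Nat.pair k I + 1))).filter
        (fun n => IsCapture d hd hdiv K n ∧ keyAt d hd hdiv K n = k), tcap T d n ^ 2 :=
      Finset.sum_le_sum_of_subset_of_nonneg hUsub (fun i _ _ => sq_nonneg _)

end Construction

theorem stmt13 {H : Type*} [NormedAddCommGroup H] [InnerProductSpace ℂ H] [CompleteSpace H]
    [TopologicalSpace.SeparableSpace H] (hinf : ¬ FiniteDimensional ℂ H)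
    (T : H →L[ℂ] H) (hsa : IsSelfAdjoint T)
    (lam : ℕ → ℝ)
    (hlam : ∀ n, lam n ∈ interior {t : ℝ | (t : ℂ) ∈ essNumRange T})
    (hdiv : ¬ Summable
      (fun n => Metric.infDist (lam n) (frontier {t : ℝ | (t : ℂ) ∈ essNumRange T})))
    (K : ℕ) :
    ∃ u : ℕ → H, IsONBasis u ∧ (∀ n, ⟪u n, T (u n)⟫_ℂ = (lam n : ℂ)) ∧
      ∀ n j : ℕ, 1 ≤ |(n : ℤ) - (j : ℤ)| → |(n : ℤ) - (j : ℤ)| ≤ (K : ℤ) →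
        ⟪u j, T (u n)⟫_ℂ = 0 := by
  classical
  haveI : Nonempty H := ⟨0⟩
  set S : Set ℝ := {t : ℝ | (t : ℂ) ∈ essNumRange T} with hS
  set d : ℕ → ℝ := fun n => Metric.infDist (lam n) (frontier S) with hddef
  have hd : ∀ n, 0 ≤ d n := fun n => Metric.infDist_nonneg
  have hdiv' : ¬ Summable d := hdiv
  have hfr : (frontier S).Nonempty := by
    by_contra hne
    rw [Set.not_nonempty_iff_eq_empty] at hne
    apply hdiv'
    have heq : d = fun _ => (0 : ℝ) := by
      funext n
      rw [hddef]
      simp only []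
      rw [hne, Metric.infDist_empty]
    rw [heq]
    exact summable_zero
  have hdpos : ∀ n, 0 < d n := by
    intro n
    have h2 : lam n ∈ interior S := hlam n
    have h3 : lam n ∉ frontier S := by
      rw [frontier]
      intro hmem
      exact hmem.2 h2
    exact (IsClosed.notMem_iff_infDist_pos isClosed_frontier hfr).mp h3
  have hball : ∀ n, Metric.ball (lam n) (d n) ⊆ S := fun n =>
    ball_infDist_frontier_subset (hlam n)
  have hmem1 : ∀ n, ((lam n - d n / 2 : ℝ) : ℂ) ∈ essNumRange T := by
    intro n
    have h4 : lam n - d n / 2 ∈ S := by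
      apply hball n
      rw [Metric.mem_ball, Real.dist_eq]
      rw [show lam n - d n / 2 - lam n = -(d n / 2) by ring, abs_neg,
        abs_of_pos (by linarith [hdpos n])]
      linarith [hdpos n]
    exact h4
  have hmem2 : ∀ n, ((lam n + d n / 2 : ℝ) : ℂ) ∈ essNumRange T := by
    intro n
    have h4 : lam n + d n / 2 ∈ S := by
      apply hball n
      rw [Metric.mem_ball, Real.dist_eq]
      rw [show lam n + d n / 2 - lam n = d n / 2 by ring,
        abs_of_pos (by linarith [hdpos n])]
      linarith [hdpos n]
    exact h4
  obtain ⟨f, hfdense⟩ := TopologicalSpace.exists_dense_seq H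
  set u : ℕ → H := useq T lam f d hd hdiv' K with hu
  have hext : ∀ n, ExtP T lam f d hd hdiv' K u n (u n) :=
    useq_ext T lam f d hd hdiv' K hinf hsa hmem1 hmem2 hdpos
  -- orthonormality
  have horm : Orthonormal ℂ u := by
    rw [orthonormal_iff_ite]
    intro i j
    by_cases hij : i = j
    · subst hij
      rw [if_pos rfl, inner_self_eq_norm_sq_to_K, (hext i).1]
      norm_num
    · rw [if_neg hij]
      rcases lt_or_gt_of_ne hij with h | h
      · exact (hext j).2.1 i h
      · rw [← inner_conj_symm, (hext i).2.1 j h, map_zero]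
  -- diagonal values
  have hdiag : ∀ n, ⟪u n, T (u n)⟫_ℂ = ((lam n : ℝ) : ℂ) := fun n => (hext n).2.2.2.1
  -- band zeros
  have hband : ∀ n j : ℕ, 1 ≤ |(n : ℤ) - (j : ℤ)| → |(n : ℤ) - (j : ℤ)| ≤ (K : ℤ) →
      ⟪u j, T (u n)⟫_ℂ = 0 := by
    intro n j h1 h2
    have h3 := abs_le.mp h2
    have hne : n ≠ j := by
      intro hcon
      subst hcon
      simp at h1
    rcases lt_or_gt_of_ne hne with h | h
    · -- n < j : use clause 3 at step j
      have := (hext j).2.2.1 n h (by omega)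
      rw [← inner_conj_symm, this, map_zero]
    · -- j < n : use clause 3 at step n with symmetry
      have h4 := (hext n).2.2.1 j h (by omega)
      rw [show ⟪u j, T (u n)⟫_ℂ = ⟪T (u j), u n⟫_ℂ from (symm_inner hsa (u j) (u n)).symm]
      exact h4
  -- completeness
  have hcompl : ∀ k, f k ∈ (Submodule.span ℂ (Set.range u)).topologicalClosure := by
    intro k
    have hclos : f k ∈ closure ((Submodule.span ℂ (Set.range u) : Submodule ℂ H) : Set H) := by
      rw [Metric.mem_closure_iff]
      intro ε hε
      -- choose N with the capture sum large
      set A : ℝ := ‖f k‖ ^ 2 + 1 with hA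
      have hApos : 0 < A := by positivity
      set C : ℝ := Real.log (A / (ε ^ 2 / 2)) with hC
      obtain ⟨N, hN⟩ := capture_sum_unbounded T d hd hdiv' K k C
      have hdecay := resid_decay T lam f d hd hdiv' K hinf hsa hmem1 hmem2 hdpos k N
      have hexp : Real.exp (-(∑ n ∈ (Finset.range N).filter
          (fun n => IsCapture d hd hdiv' K n ∧ keyAt d hd hdiv' K n = k), tcap T d n ^ 2))
          ≤ Real.exp (-C) := by
        apply Real.exp_le_exp.mpr
        linarith
      have hexpC : Real.exp (-C) = (ε ^ 2 / 2) / A := by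
        rw [hC, ← Real.log_inv, Real.exp_log]
        · rw [inv_div]
        · positivity
      have hres : ‖resid f u k N‖ ^ 2 ≤ ε ^ 2 / 2 := by
        have h5 : ‖f k‖ ^ 2 * Real.exp (-(∑ n ∈ (Finset.range N).filter
            (fun n => IsCapture d hd hdiv' K n ∧ keyAt d hd hdiv' K n = k), tcap T d n ^ 2))
            ≤ A * Real.exp (-C) := by
          apply mul_le_mul _ hexp (Real.exp_nonneg _) (by positivity)
          rw [hA]; linarith
        rw [hexpC] at h5
        have h6 : A * (ε ^ 2 / 2 / A) = ε ^ 2 / 2 := by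
          field_simp
        calc ‖resid f u k N‖ ^ 2 ≤ _ := hdecay
          _ ≤ A * (ε ^ 2 / 2 / A) := h5
          _ = ε ^ 2 / 2 := h6
      have hreslt : ‖resid f u k N‖ < ε := by
        nlinarith [norm_nonneg (resid f u k N)]
      refine ⟨∑ j ∈ Finset.range N, ⟪u j, f k⟫_ℂ • u j, ?_, ?_⟩
      · apply Submodule.sum_mem
        intro j _
        exact Submodule.smul_mem _ _ (Submodule.subset_span ⟨j, rfl⟩)
      · rw [dist_eq_norm]
        have : f k - ∑ j ∈ Finset.range N, ⟪u j, f k⟫_ℂ • u j = resid f u k N := by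
          rw [resid]
        rw [this]
        exact hreslt
    rwa [← Submodule.topologicalClosure_coe] at hclos
  have htop : (Submodule.span ℂ (Set.range u)).topologicalClosure = ⊤ := by
    rw [Submodule.eq_top_iff']
    intro x
    have hx : x ∈ closure (Set.range f) := hfdense x
    have hsub : Set.range f ⊆
        ((Submodule.span ℂ (Set.range u)).topologicalClosure : Set H) := by
      rintro _ ⟨k, rfl⟩
      exact hcompl k
    have hclosed : IsClosed ((Submodule.span ℂ (Set.range u)).topologicalClosure : Set H) :=
      Submodule.isClosed_topologicalClosure _
    exact hclosed.closure_subset_iff.mpr hsub hx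
  exact ⟨u, ⟨horm, htop⟩, hdiag, hband⟩
end

section
/- Let H be a complex separable infinite-dimensional Hilbert space, let T be a bounded linear operator on H, and let λ ∈ Int W_e(T). Then for every closed subspace M ⊆ H of finite codimension there exists a unit vector x ∈ M such that ⟨T x, x⟩ = λ. -/
open scoped InnerProductSpace

section AuxTH
open Complex Filter

variable {H : Type*} [NormedAddCommGroup H] [InnerProductSpace ℂ H]

lemma quad_expand (T : H →L[ℂ] H) (x y : H) (c d : ℂ) :
    ⟪c • x + d • y, T (c • x + d • y)⟫_ℂ =
      (starRingEnd ℂ c) * c * ⟪x, T x⟫_ℂ + (starRingEnd ℂ c) * d * ⟪x, T y⟫_ℂ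
      + (starRingEnd ℂ d) * c * ⟪y, T x⟫_ℂ + (starRingEnd ℂ d) * d * ⟪y, T y⟫_ℂ := by
  simp [inner_add_left, inner_add_right, inner_smul_left, inner_smul_right, map_add, map_smul]
  ring

lemma inner_expand (x y : H) (c d : ℂ) :
    ⟪c • x + d • y, (c • x + d • y)⟫_ℂ =
      (starRingEnd ℂ c) * c * ⟪x, x⟫_ℂ + (starRingEnd ℂ c) * d * ⟪x, y⟫_ℂ
      + (starRingEnd ℂ d) * c * ⟪y, x⟫_ℂ + (starRingEnd ℂ d) * d * ⟪y, y⟫_ℂ := by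
  simp only [inner_add_left, inner_add_right, inner_smul_left, inner_smul_right]
  ring

theorem toeplitz_segment (T : H →L[ℂ] H) {x y : H} (hx : ‖x‖ = 1) (hy : ‖y‖ = 1)
    {t : ℝ} (ht0 : 0 ≤ t) (ht1 : t ≤ 1) :
    ∃ z ∈ Submodule.span ℂ ({x, y} : Set H), ‖z‖ = 1 ∧
      ⟪z, T z⟫_ℂ = t * ⟪x, T x⟫_ℂ + (1 - t) * ⟪y, T y⟫_ℂ := by
  set a := ⟪x, T x⟫_ℂ with ha
  set b := ⟪y, T y⟫_ℂ with hb
  by_cases hab : a = b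
  · refine ⟨x, Submodule.subset_span (by simp), hx, ?_⟩
    linear_combination (1 - (t:ℂ)) * hab
  have hA : a - b ≠ 0 := sub_ne_zero.mpr hab
  set p := ⟪x, y⟫_ℂ with hp
  set d₁ := ⟪x, T y⟫_ℂ - b * p with hd₁
  set d₂ := ⟪y, T x⟫_ℂ - b * (starRingEnd ℂ p) with hd₂
  obtain ⟨α, hα⟩ : ∃ α : ℝ, ((a-b)⁻¹ * (Complex.exp (α * Complex.I) * d₁
      + Complex.exp (-(α * Complex.I)) * d₂)).im = 0 := by
    set g : ℝ → ℝ := fun α => ((a-b)⁻¹ * (Complex.exp (α * Complex.I) * d₁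
      + Complex.exp (-(α * Complex.I)) * d₂)).im with hg
    have hcont : Continuous g := by
      apply Complex.continuous_im.comp
      fun_prop
    have hgπ : g Real.pi = - g 0 := by
      have h1 : Complex.exp ((Real.pi:ℝ) * Complex.I) = -1 := Complex.exp_pi_mul_I
      have h2 : Complex.exp (-((Real.pi:ℝ) * Complex.I)) = -1 := by
        rw [Complex.exp_neg, h1]; norm_num
      simp only [hg, h1, h2, Complex.ofReal_zero, zero_mul, neg_zero, Complex.exp_zero,
        one_mul, neg_one_mul]
      rw [show -d₁ + -d₂ = -(d₁ + d₂) by ring, mul_neg, Complex.neg_im]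
    rcases le_total (g 0) 0 with h0 | h0
    · obtain ⟨α, _, hα⟩ := intermediate_value_Icc (le_of_lt Real.pi_pos) hcont.continuousOn
        ⟨h0, by rw [hgπ]; linarith⟩
      exact ⟨α, hα⟩
    · obtain ⟨α, _, hα⟩ := intermediate_value_Icc' (le_of_lt Real.pi_pos) hcont.continuousOn
        ⟨by rw [hgπ]; linarith, h0⟩
      exact ⟨α, hα⟩
  set μ := Complex.exp (α * Complex.I) with hμ
  have hμconj : starRingEnd ℂ μ = Complex.exp (-(α * Complex.I)) := by
    rw [hμ, ← Complex.exp_conj]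
    congr 1
    simp
  have hμunit : (starRingEnd ℂ μ) * μ = 1 := by
    rw [hμconj, ← Complex.exp_add]; simp
  set r : ℝ := ((a-b)⁻¹ * (μ * d₁ + (starRingEnd ℂ μ) * d₂)).re with hr
  have hrC : (a - b) * (r : ℂ) = μ * d₁ + (starRingEnd ℂ μ) * d₂ := by
    have h3 : ((r:ℝ) : ℂ) = (a-b)⁻¹ * (μ * d₁ + (starRingEnd ℂ μ) * d₂) := by
      apply Complex.ext
      · simp [hr]
      · rw [← hμconj] at hα
        simpa using hα.symm
    rw [h3, ← mul_assoc, mul_inv_cancel₀ hA, one_mul]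
  rw [hd₁, hd₂] at hrC
  set w : ℝ → H := fun s => ((1-s : ℝ) : ℂ) • x + ((s:ℝ) : ℂ) • (μ • y) with hw
  have hinner_xx : ⟪x, x⟫_ℂ = 1 := by
    rw [inner_self_eq_norm_sq_to_K, hx]; norm_num
  have hinner_yy : ⟪y, y⟫_ℂ = 1 := by
    rw [inner_self_eq_norm_sq_to_K, hy]; norm_num
  have hwinner : ∀ s : ℝ, ⟪w s, w s⟫_ℂ = ((‖w s‖^2 : ℝ) : ℂ) := fun s => by
    rw [inner_self_eq_norm_sq_to_K]; norm_cast
  have hwnz : ∀ s ∈ Set.Icc (0:ℝ) 1, w s ≠ 0 := by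
    rintro s ⟨hs0, hs1⟩ hzero
    have h1 : ((1-s : ℝ) : ℂ) • x = -(((s:ℝ) : ℂ) • (μ • y)) := by
      rw [hw] at hzero; simp only at hzero
      linear_combination (norm := module) hzero
    have hn : ‖((1-s : ℝ) : ℂ) • x‖ = ‖((s:ℝ) : ℂ) • (μ • y)‖ := by rw [h1, norm_neg]
    have hμn : ‖μ‖ = 1 := by
      rw [hμ]; exact Complex.norm_exp_ofReal_mul_I α
    rw [norm_smul, norm_smul, norm_smul, hx, hy, hμn] at hn
    simp only [Complex.norm_real, Real.norm_eq_abs, mul_one] at hn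
    rw [_root_.abs_of_nonneg (by linarith : (0:ℝ) ≤ 1 - s), _root_.abs_of_nonneg hs0] at hn
    have hs : s = 1/2 := by linarith
    have hxy : x = -(μ • y) := by
      have h2 : ((1-s:ℝ) : ℂ) ≠ 0 := by
        rw [hs]; norm_num
      have h4 := congrArg (fun v => (((1-s:ℝ):ℂ))⁻¹ • v) h1
      simp only [smul_smul, inv_mul_cancel₀ h2, one_smul, smul_neg] at h4
      rw [h4, hs]
      norm_num
      module
    apply hab
    rw [ha, hxy]
    simp only [map_neg, inner_neg_left, inner_neg_right, neg_neg, inner_smul_left,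
      inner_smul_right, map_smul, ContinuousLinearMap.map_smul, smul_eq_mul]
    simp only [← hb]
    linear_combination b * hμunit
  have hQ : ∀ s : ℝ, ⟪w s, T (w s)⟫_ℂ
      = b * ((‖w s‖^2 : ℝ) : ℂ) + (a - b) * (((1-s)^2 + s*(1-s)*r : ℝ) : ℂ) := by
    intro s
    have e1 := quad_expand T x (μ • y) ((1-s : ℝ) : ℂ) ((s:ℝ) : ℂ)
    have e2 := inner_expand x (μ • y) ((1-s : ℝ) : ℂ) ((s:ℝ) : ℂ)
    rw [← hwinner]
    rw [hw]; simp only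
    rw [e1, e2]
    simp only [inner_smul_left, inner_smul_right, map_smul, ContinuousLinearMap.map_smul,
      smul_eq_mul, Complex.conj_ofReal]
    have hyx : ⟪y, x⟫_ℂ = starRingEnd ℂ p := by rw [hp, ← inner_conj_symm]
    rw [hinner_xx, hinner_yy, hyx]
    simp only [← ha, ← hb, ← hp]
    push_cast
    linear_combination (-((s:ℂ) * (1 - (s:ℂ)))) * hrC
  set F : ℝ → ℝ := fun s => ((1-s)^2 + s*(1-s)*r) / ‖w s‖^2 with hF
  have hwcont : Continuous w := by
    rw [hw]; fun_prop
  have hFcont : ContinuousOn F (Set.Icc 0 1) := by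
    apply ContinuousOn.div
    · fun_prop
    · fun_prop
    · intro s hs
      exact pow_ne_zero 2 (norm_ne_zero_iff.mpr (hwnz s hs))
  have hw0 : w 0 = x := by simp [hw]
  have hF0 : F 0 = 1 := by
    have h5 : ‖w 0‖ = 1 := by rw [hw0, hx]
    simp [hF, h5]
  have hF1 : F 1 = 0 := by simp [hF]
  have hmem : t ∈ Set.Icc (F 1) (F 0) := by rw [hF0, hF1]; exact ⟨ht0, ht1⟩
  obtain ⟨s, hs01, hFs⟩ := intermediate_value_Icc' (by norm_num : (0:ℝ) ≤ 1) hFcont hmem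
  have hwsnz : w s ≠ 0 := hwnz s hs01
  have hn : ‖w s‖ ≠ 0 := norm_ne_zero_iff.mpr hwsnz
  simp only [hF] at hFs
  have hnum : (1-s)^2 + s*(1-s)*r = t * ‖w s‖^2 :=
    (div_eq_iff (pow_ne_zero 2 hn)).mp hFs
  have hnumC : (((1-s)^2 + s*(1-s)*r : ℝ) : ℂ) = (t:ℂ) * ((‖w s‖ : ℝ):ℂ)^2 := by
    exact_mod_cast congrArg (fun u : ℝ => (u : ℂ)) hnum
  have hnC : ((‖w s‖ : ℝ) : ℂ) ≠ 0 := by exact_mod_cast hn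
  refine ⟨((‖w s‖⁻¹ : ℝ) : ℂ) • w s, ?_, ?_, ?_⟩
  · apply Submodule.smul_mem
    rw [hw]
    exact Submodule.add_mem _
      (Submodule.smul_mem _ _ (Submodule.subset_span (by simp)))
      (Submodule.smul_mem _ _ (Submodule.smul_mem _ _ (Submodule.subset_span (by simp))))
  · rw [norm_smul, Complex.norm_real, Real.norm_eq_abs,
      _root_.abs_of_nonneg (inv_nonneg.mpr (norm_nonneg _)), inv_mul_cancel₀ hn]
  · rw [ContinuousLinearMap.map_smul, inner_smul_left, inner_smul_right,
      Complex.conj_ofReal, hQ s, hnumC]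
    have h6 : ((‖w s‖^2 : ℝ) : ℂ) = ((‖w s‖ : ℝ):ℂ)^2 := by push_cast; ring
    rw [h6]
    push_cast
    field_simp
    ring

variable [CompleteSpace H]

lemma essNumRange_subset_closure' (T : H →L[ℂ] H) (M : Submodule ℂ H)
    (hMc : IsClosed (M : Set H)) (hMf : FiniteDimensional ℂ ↥Mᗮ) :
    {z | ∃ e : ℕ → H, Orthonormal ℂ e ∧
      Filter.Tendsto (fun n => ⟪e n, T (e n)⟫_ℂ) Filter.atTop (nhds z)} ⊆
    closure {w : ℂ | ∃ x, x ∈ M ∧ ‖x‖ = 1 ∧ ⟪x, T x⟫_ℂ = w} := by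
  rintro z ⟨e, he, hlim⟩
  haveI : CompleteSpace M := hMc.completeSpace_coe
  haveI : CompleteSpace ↥Mᗮ := FiniteDimensional.complete ℂ _
  -- weak convergence of e to 0 against fixed vectors
  have hw : ∀ v : H, Filter.Tendsto (fun n => ‖⟪v, e n⟫_ℂ‖) Filter.atTop (nhds 0) := by
    intro v
    have hsum : Summable fun n => ‖⟪e n, v⟫_ℂ‖ ^ 2 :=
      Orthonormal.inner_products_summable v he
    have h1 := hsum.tendsto_atTop_zero
    have h2 : Filter.Tendsto (fun n => ‖⟪e n, v⟫_ℂ‖) Filter.atTop (nhds 0) := by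
      have h4 := (Real.continuous_sqrt.tendsto 0).comp h1
      simp only [Function.comp_def] at h4
      simpa [Real.sqrt_sq_eq_abs] using h4
    simpa [norm_inner_symm] using h2
  set b := stdOrthonormalBasis ℂ ↥Mᗮ with hbb
  have hproj : ∀ v : H, ((Mᗮ.orthogonalProjectionOnto v : H))
      = ∑ i, ⟪((b i : ↥Mᗮ) : H), v⟫_ℂ • ((b i : ↥Mᗮ) : H) := by
    intro v
    rw [b.orthogonalProjectionOnto_apply_eq_sum v]
    push_cast
    rfl
  set P : ℕ → H := fun n => (Mᗮ.orthogonalProjectionOnto (e n) : H) with hP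
  have hPnorm : Filter.Tendsto (fun n => ‖P n‖) Filter.atTop (nhds 0) := by
    have hsum : ∀ n, P n = ∑ i, ⟪((b i : ↥Mᗮ) : H), e n⟫_ℂ • ((b i : ↥Mᗮ) : H) :=
      fun n => hproj (e n)
    have hb1 : ∀ i, ‖((b i : ↥Mᗮ) : H)‖ = 1 := fun i => by
      rw [← Submodule.coe_norm]
      exact b.orthonormal.1 i
    have hbound : ∀ n, ‖P n‖ ≤ ∑ i, ‖⟪((b i : ↥Mᗮ) : H), e n⟫_ℂ‖ := by
      intro n
      rw [hsum n]
      refine (norm_sum_le _ _).trans ?_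
      apply Finset.sum_le_sum
      intro i _
      rw [norm_smul, hb1 i, mul_one]
    have hsumt : Filter.Tendsto (fun n => ∑ i, ‖⟪((b i : ↥Mᗮ) : H), e n⟫_ℂ‖)
        Filter.atTop (nhds 0) := by
      have := tendsto_finset_sum (Finset.univ) (fun i _ => hw ((b i : ↥Mᗮ) : H))
      simpa using this
    exact squeeze_zero (fun n => norm_nonneg _) hbound hsumt
  set m : ℕ → H := fun n => e n - P n with hm
  have hmM : ∀ n, m n ∈ M := by
    intro n
    have h1 : m n ∈ Mᗮᗮ := Submodule.sub_starProjection_mem_orthogonal (K := Mᗮ) (e n)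
    rwa [Submodule.orthogonal_orthogonal] at h1
  have hme : ∀ n, m n - e n = -(P n) := fun n => by rw [hm]; beta_reduce; abel
  -- norms of m tend to 1
  have hmn1 : Filter.Tendsto (fun n => ‖m n‖) Filter.atTop (nhds 1) := by
    have hd : Filter.Tendsto (fun n => ‖m n‖ - 1) Filter.atTop (nhds 0) := by
      rw [tendsto_zero_iff_norm_tendsto_zero]
      apply squeeze_zero (fun n => norm_nonneg _) _ hPnorm
      intro n
      have h1 : ‖m n‖ - 1 = ‖m n‖ - ‖e n‖ := by rw [he.1 n]
      rw [Real.norm_eq_abs, h1]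
      calc |‖m n‖ - ‖e n‖| ≤ ‖m n - e n‖ := abs_norm_sub_norm_le _ _
        _ = ‖P n‖ := by rw [hme n, norm_neg]
    have := hd.add_const 1
    simpa using this
  -- quadratic form values converge
  have hQm : Filter.Tendsto (fun n => ⟪m n, T (m n)⟫_ℂ) Filter.atTop (nhds z) := by
    have hdiff : Filter.Tendsto (fun n => ⟪m n, T (m n)⟫_ℂ - ⟪e n, T (e n)⟫_ℂ)
        Filter.atTop (nhds 0) := by
      rw [tendsto_zero_iff_norm_tendsto_zero]
      apply squeeze_zero (g := fun n => ‖P n‖ * (‖T‖ * ‖m n‖) + ‖T‖ * ‖P n‖)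
        (fun n => norm_nonneg _) _
      · have h0 : Filter.Tendsto (fun n => ‖P n‖ * (‖T‖ * ‖m n‖) + ‖T‖ * ‖P n‖)
            Filter.atTop (nhds (0 * (‖T‖ * 1) + ‖T‖ * 0)) :=
          ((hPnorm.mul ((tendsto_const_nhds).mul hmn1))).add
            ((tendsto_const_nhds).mul hPnorm)
        simpa using h0
      intro n
      have hid : ⟪m n, T (m n)⟫_ℂ - ⟪e n, T (e n)⟫_ℂ
          = ⟪m n - e n, T (m n)⟫_ℂ + ⟪e n, T (m n - e n)⟫_ℂ := by
        simp only [inner_sub_left, map_sub, inner_sub_right]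
        ring
      rw [hid]
      calc ‖⟪m n - e n, T (m n)⟫_ℂ + ⟪e n, T (m n - e n)⟫_ℂ‖
          ≤ ‖⟪m n - e n, T (m n)⟫_ℂ‖ + ‖⟪e n, T (m n - e n)⟫_ℂ‖ := norm_add_le _ _
        _ ≤ ‖m n - e n‖ * ‖T (m n)‖ + ‖e n‖ * ‖T (m n - e n)‖ := by
            gcongr <;> exact norm_inner_le_norm _ _
        _ ≤ ‖P n‖ * (‖T‖ * ‖m n‖) + ‖T‖ * ‖P n‖ := by
            rw [hme n, norm_neg, he.1 n, one_mul]
            gcongr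
            · exact T.le_opNorm _
            · calc ‖T (-(P n))‖ ≤ ‖T‖ * ‖-(P n)‖ := T.le_opNorm _
                _ = ‖T‖ * ‖P n‖ := by rw [norm_neg]
    have := hdiff.add hlim
    simpa using this
  -- normalized values
  have hval : Filter.Tendsto (fun n => (((‖m n‖^2)⁻¹ : ℝ) : ℂ) * ⟪m n, T (m n)⟫_ℂ)
      Filter.atTop (nhds z) := by
    have h1 : Filter.Tendsto (fun n => ((‖m n‖^2)⁻¹ : ℝ)) Filter.atTop (nhds 1) := by
      have := ((hmn1.pow 2).inv₀ (by norm_num : (1:ℝ)^2 ≠ 0))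
      simpa using this
    have h2 : Filter.Tendsto (fun n => (((‖m n‖^2)⁻¹ : ℝ) : ℂ)) Filter.atTop (nhds 1) := by
      have := (Complex.continuous_ofReal.tendsto 1).comp h1
      simp only [Function.comp_def] at this
      simpa using this
    have := h2.mul hQm
    simpa using this
  apply mem_closure_of_tendsto hval
  have hev : ∀ᶠ n in Filter.atTop, (1:ℝ)/2 < ‖m n‖ := hmn1.eventually (eventually_gt_nhds (by norm_num))
  filter_upwards [hev] with n hn
  have hmnz : ‖m n‖ ≠ 0 := by linarith
  refine ⟨((‖m n‖⁻¹ : ℝ) : ℂ) • m n, Submodule.smul_mem _ _ (hmM n), ?_, ?_⟩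
  · rw [norm_smul, Complex.norm_real, Real.norm_eq_abs,
      _root_.abs_of_nonneg (inv_nonneg.mpr (norm_nonneg _)), inv_mul_cancel₀ hmnz]
  · rw [ContinuousLinearMap.map_smul, inner_smul_left, inner_smul_right, Complex.conj_ofReal]
    push_cast
    ring

end AuxTH

theorem stmt19 {H : Type*} [NormedAddCommGroup H] [InnerProductSpace ℂ H] [CompleteSpace H]
    [TopologicalSpace.SeparableSpace H] (hinf : ¬ FiniteDimensional ℂ H)
    (T : H →L[ℂ] H) (lam : ℂ) (hlam : lam ∈ interior (essNumRange T))
    (M : Submodule ℂ H) (hMc : IsClosed (M : Set H)) (hMf : FiniteDimensional ℂ ↥Mᗮ) :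
    ∃ x : H, x ∈ M ∧ ‖x‖ = 1 ∧ ⟪x, T x⟫_ℂ = lam := by
  classical
  set S := {w : ℂ | ∃ x, x ∈ M ∧ ‖x‖ = 1 ∧ ⟪x, T x⟫_ℂ = w} with hSdef
  have hconv : Convex ℝ S := by
    rintro u hu v hv s t hs ht hst
    obtain ⟨xu, hxuM, hxu1, hxuv⟩ := hu
    obtain ⟨xv, hxvM, hxv1, hxvv⟩ := hv
    obtain ⟨zz, hzmem, hz1, hzval⟩ := toeplitz_segment T hxu1 hxv1 hs (by linarith)
    refine ⟨zz, Submodule.span_le.mpr ?_ hzmem, hz1, ?_⟩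
    · exact Set.insert_subset_iff.mpr ⟨hxuM, Set.singleton_subset_iff.mpr hxvM⟩
    · rw [hzval, hxuv, hxvv]
      have ht' : (1:ℂ) - (s:ℂ) = (t:ℂ) := by
        have : (1:ℝ) - s = t := by linarith
        exact_mod_cast congrArg (fun r : ℝ => (r:ℂ)) this
      rw [ht']
      simp [Complex.real_smul]
  have hsub : essNumRange T ⊆ closure S := essNumRange_subset_closure' T M hMc hMf
  have hlam2 : lam ∈ interior (closure S) := interior_mono hsub hlam
  have hconvc : Convex ℝ (closure S) := hconv.closure
  have hne : (interior S).Nonempty := by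
    rw [hconv.interior_nonempty_iff_affineSpan_eq_top]
    have h1 : affineSpan ℝ (closure S) = ⊤ := by
      rw [← hconvc.interior_nonempty_iff_affineSpan_eq_top]
      exact ⟨lam, hlam2⟩
    have h2 : closure S ⊆ (affineSpan ℝ S : Set ℂ) :=
      closure_minimal (subset_affineSpan ℝ S) (affineSpan ℝ S).closed_of_finiteDimensional
    have h3 : affineSpan ℝ (closure S) ≤ affineSpan ℝ S := affineSpan_le.mpr h2
    rw [h1] at h3
    exact eq_top_iff.mpr h3
  obtain ⟨q, hq⟩ := hne
  have hfinal : lam ∈ S := by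
    by_cases hlq : lam = q
    · exact interior_subset (hlq ▸ hq)
    · have hnq : (0:ℝ) < ‖lam - q‖ := by
        rw [norm_pos_iff, sub_ne_zero]
        exact hlq
      obtain ⟨δ, hδ, hball⟩ := Metric.isOpen_iff.mp isOpen_interior lam hlam2
      set ε : ℝ := δ / (2 * ‖lam - q‖) with hε
      have hεpos : 0 < ε := by positivity
      have hq2 : lam + ε • (lam - q) ∈ closure S := by
        apply interior_subset (hball ?_)
        rw [Metric.mem_ball, dist_eq_norm, add_sub_cancel_left, norm_smul,
          Real.norm_eq_abs, _root_.abs_of_pos hεpos, hε]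
        have hne0 : ‖lam - q‖ ≠ 0 := hnq.ne'
        have h5 : δ / (2 * ‖lam - q‖) * ‖lam - q‖ = δ / 2 := by
          have h2a : (2 * ‖lam - q‖) ≠ 0 := ne_of_gt (by positivity)
          rw [div_mul_eq_mul_div, div_eq_div_iff h2a two_ne_zero]
          ring
        rw [h5]
        linarith
      have h1ε : (0:ℝ) < 1 + ε := by positivity
      have hcombo := hconv.combo_closure_interior_mem_interior hq2 hq
        (a := 1/(1+ε)) (b := ε/(1+ε)) (by positivity) (by positivity)
        (by field_simp)
      have h1εC : (1:ℂ) + (ε:ℂ) ≠ 0 := by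
        exact_mod_cast h1ε.ne'
      have heq : (1/(1+ε)) • (lam + ε • (lam - q)) + (ε/(1+ε)) • q = lam := by
        simp only [Complex.real_smul]
        push_cast
        field_simp
        ring
      rw [heq] at hcombo
      exact interior_subset hcombo
  obtain ⟨x, h1, h2, h3⟩ := hfinal
  exact ⟨x, h1, h2, h3⟩
end
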